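/- arXiv:2006.11727 — 4 statements merged into one kernel-verified Lean document; each statement's English description precedes it below -/
import Mathlib

section
/- Let {α_k}_{k=0}^n be arbitrary nonzero real numbers with n ≥ 1. Then there exist b > 0, ζ ∈ ℝ, and a function σ ∈ Z_{1,b} whose restriction to ℝ is real-valued, such that (ζ, {(α_k, 1, k)}_{k=0}^n) is an affine symmetry of σ|_ℝ. -/
open scoped Classical
noncomputable section

namespace NNPaper

/-- A *nonlinearity*: a continuous function `ℝ → ℝ` that is not affine. -/
def Nonlinearity (ρ : ℝ → ℝ) : Prop :=
  Continuous ρ ∧ ∀ a b : ℝ, ρ ≠ fun t => a * t + b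

/-- Linear independence (over `ℝ`) of a set of real-valued functions on `ℝ`. -/
def LinIndepSet (S : Set (ℝ → ℝ)) : Prop :=
  LinearIndependent ℝ (fun g : S => (g : ℝ → ℝ))

/-- `(ζ, {(α s, β s, γ s)}_{s ∈ I})` is an *affine symmetry* of the nonlinearity `ρ`:
`I` is nonempty, `∑_{s ∈ I} α s • ρ (β s • t + γ s) = ζ` for all `t`, and for no proper
subset `I'` of `I` is the set `{ρ (β s • ⬝ + γ s) : s ∈ I'} ∪ {1}` linearly dependent. -/
def IsAffineSymmetry (ρ : ℝ → ℝ) {ι : Type} (I : Finset ι) (ζ : ℝ) (α β γ : ι → ℝ) : Prop :=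
  I.Nonempty ∧
  (∀ t : ℝ, ∑ s ∈ I, α s * ρ (β s * t + γ s) = ζ) ∧
  ∀ I' : Finset ι, I' ⊂ I →
    LinIndepSet (insert (fun _ : ℝ => (1 : ℝ))
      ((fun s => fun t : ℝ => ρ (β s * t + γ s)) '' (I' : Set ι)))

end NNPaper
namespace NNPaper

/-- The sign of an integer, as a complex number. -/
def sgnz (k : ℤ) : ℂ := if 0 < k then 1 else if k < 0 then -1 else 0

/-- The `k`-th term of the series defining the nonlinearities in `Z_{a,b}`:
`c k • (sgn k + tanh (π b⁻¹ (z - k a)))`. -/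
def zabTerm (a b : ℝ) (c : ℤ → ℂ) (k : ℤ) (z : ℂ) : ℂ :=
  c k * (sgnz k + Complex.tanh ((Real.pi / b : ℝ) * (z - (k : ℂ) * (a : ℂ))))

/-- Membership in the class `Z_{a,b}` of "tanh-type" nonlinearities. -/
def MemZab (a b : ℝ) (σ : ℂ → ℂ) : Prop :=
  ∃ (C : ℂ) (c : ℤ → ℂ),
    (∃ a' : ℝ, a' ∈ Set.Ioo 0 a ∧
      ∃ M : ℝ, ∀ k : ℤ, ‖c k‖ * Real.exp (-(Real.pi * a' * |(k : ℝ)|) / b) ≤ M) ∧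
    (∃ k : ℤ, c k ≠ 0) ∧
    σ = fun z : ℂ => C + ∑' k : ℤ, zabTerm a b c k z

end NNPaper
namespace NNPaper


def useq (n : ℕ) (α : Fin (n+1) → ℝ) : ℕ → ℝ
  | m =>
    if m < n then (if m = n - 1 then 1 else 0)
    else -(α (Fin.last n))⁻¹ * ∑ k : Fin n, α k.castSucc * useq n α (m - n + k)
  termination_by m => m
  decreasing_by have := k.isLt; omega

def vseq (n : ℕ) (α : Fin (n+1) → ℝ) : ℕ → ℝ
  | i =>
    if i = 0 then useq n α 0
    else -(α 0)⁻¹ * ∑ k : Fin n, α k.succ *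
      (if i ≤ (k:ℕ)+1 then useq n α ((k:ℕ)+1 - i) else vseq n α (i - ((k:ℕ)+1)))
  termination_by i => i
  decreasing_by omega

def cseq (n : ℕ) (α : Fin (n+1) → ℝ) : ℤ → ℝ :=
  fun m => if 0 ≤ m then useq n α m.toNat else vseq n α (-m).toNat

variable {n : ℕ} {α : Fin (n+1) → ℝ} {B : ℝ}

lemma cseq_window (m : ℕ) (hm : m < n) :
    cseq n α (m : ℤ) = if m = n - 1 then 1 else 0 := by
  simp only [cseq, Int.toNat_natCast, if_pos (Int.natCast_nonneg m)]
  rw [useq]; simp [hm]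

lemma cseq_one (hn : 1 ≤ n) : cseq n α ((n:ℤ) - 1) = 1 := by
  have h : ((n:ℤ) - 1) = ((n - 1 : ℕ) : ℤ) := by omega
  rw [h, cseq_window (n-1) (by omega)]; simp

lemma cseq_rec (hn : 1 ≤ n) (hα : ∀ k, α k ≠ 0) (m : ℤ) :
    ∑ k : Fin (n+1), α k * cseq n α (m + (k : ℕ)) = 0 := by
  rcases le_or_gt 0 m with hm | hm
  · -- forward case
    rw [Fin.sum_univ_castSucc]
    have hcu : ∀ j : ℕ, cseq n α (m + (j:ℤ)) = useq n α (m.toNat + j) := by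
      intro j
      have h0 : (0:ℤ) ≤ m + j := by omega
      simp only [cseq, if_pos h0]
      congr 1; omega
    have hu : useq n α (m.toNat + n)
        = -(α (Fin.last n))⁻¹ * ∑ k : Fin n, α k.castSucc * useq n α (m.toNat + k) := by
      rw [useq]
      rw [if_neg (by omega)]
      congr 1
      exact Finset.sum_congr rfl (fun k _ => by congr 2; omega)
    have hlast : α (Fin.last n) * cseq n α (m + (((Fin.last n : Fin (n+1)) : ℕ) : ℤ)) =
        - ∑ k : Fin n, α k.castSucc * useq n α (m.toNat + k) := by
      have h1 : (((Fin.last n : Fin (n+1)) : ℕ) : ℤ) = (n : ℤ) := by simp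
      rw [h1, hcu n, hu]
      have hne := hα (Fin.last n)
      field_simp
    have hsum : ∀ k : Fin n, α k.castSucc * cseq n α (m + (((k.castSucc : Fin (n+1)) : ℕ) : ℤ))
        = α k.castSucc * useq n α (m.toNat + k) := by
      intro k
      have h1 : (((k.castSucc : Fin (n+1)) : ℕ) : ℤ) = ((k:ℕ) : ℤ) := by simp
      rw [h1, hcu k]
    rw [hlast, Finset.sum_congr rfl (fun k _ => hsum k)]
    ring
  · -- backward case
    rw [Fin.sum_univ_succ]
    set i : ℕ := (-m).toNat with hi
    have hi1 : 1 ≤ i := by omega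
    have h00 : (((0 : Fin (n+1)) : ℕ) : ℤ) = 0 := by simp
    have hc0 : cseq n α (m + (((0 : Fin (n+1)) : ℕ) : ℤ)) = vseq n α i := by
      rw [h00]
      simp only [cseq]
      rw [if_neg (by omega)]
      congr 1
      omega
    have hv : vseq n α i = -(α 0)⁻¹ * ∑ k : Fin n, α k.succ *
        (if i ≤ (k:ℕ)+1 then useq n α ((k:ℕ)+1 - i) else vseq n α (i - ((k:ℕ)+1))) := by
      rw [vseq]; rw [if_neg (by omega)]
    have hcs : ∀ k : Fin n,
        α (Fin.succ k) * cseq n α (m + (((Fin.succ k : Fin (n+1)) : ℕ) : ℤ)) =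
        α (Fin.succ k) * (if i ≤ (k:ℕ)+1 then useq n α ((k:ℕ)+1 - i)
          else vseq n α (i - ((k:ℕ)+1))) := by
      intro k
      have hks : (((Fin.succ k : Fin (n+1)) : ℕ) : ℤ) = ((k:ℕ) : ℤ) + 1 := by simp
      rw [hks]
      congr 1
      by_cases hk : i ≤ (k:ℕ)+1
      · rw [if_pos hk]
        simp only [cseq]
        rw [if_pos (by omega)]
        congr 1; omega
      · rw [if_neg hk]
        simp only [cseq]
        rw [if_neg (by omega)]
        congr 1; omega
    rw [hc0, hv, Finset.sum_congr rfl (fun k _ => hcs k)]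
    have hne := hα 0
    field_simp
    ring

lemma useq_abs (hn : 1 ≤ n) (hα : ∀ k, α k ≠ 0) (hB1 : 1 ≤ B)
    (hBn : (∑ k : Fin (n+1), |α k|) ≤ B * |α (Fin.last n)|) (m : ℕ) :
    |useq n α m| ≤ B ^ m := by
  induction m using Nat.strong_induction_on with
  | _ m ih =>
    by_cases hm : m < n
    · rw [useq, if_pos hm]
      have : |if m = n - 1 then (1:ℝ) else 0| ≤ 1 := by split <;> simp
      exact this.trans (one_le_pow₀ hB1)
    · have hal : (0:ℝ) < |α (Fin.last n)| := abs_pos.2 (hα _)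
      have hm1 : 1 ≤ m := by omega
      rw [useq, if_neg hm]
      rw [abs_mul, abs_neg, abs_inv]
      have hstep : |∑ k : Fin n, α k.castSucc * useq n α (m - n + k)|
          ≤ (∑ k : Fin (n+1), |α k|) * B ^ (m-1) := by
        refine (Finset.abs_sum_le_sum_abs _ _).trans ?_
        rw [Fin.sum_univ_castSucc (f := fun k => |α k|), add_mul, Finset.sum_mul]
        have h1 : ∀ k : Fin n, |α k.castSucc * useq n α (m - n + k)|
            ≤ |α k.castSucc| * B ^ (m-1) := by
          intro k
          rw [abs_mul]
          have h2 : |useq n α (m - n + k)| ≤ B ^ (m - n + (k:ℕ)) := ih _ (by have := k.isLt; omega)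
          refine mul_le_mul_of_nonneg_left (h2.trans ?_) (abs_nonneg _)
          exact pow_le_pow_right₀ hB1 (by have := k.isLt; omega)
        refine (Finset.sum_le_sum fun k _ => h1 k).trans ?_
        have : (0:ℝ) ≤ |α (Fin.last n)| * B ^ (m-1) := by positivity
        linarith
      calc |α (Fin.last n)|⁻¹ * |∑ k : Fin n, α k.castSucc * useq n α (m - n + k)|
          ≤ |α (Fin.last n)|⁻¹ * ((B * |α (Fin.last n)|) * B ^ (m-1)) := by
            refine mul_le_mul_of_nonneg_left (hstep.trans ?_) (by positivity)
            exact mul_le_mul_of_nonneg_right hBn (by positivity)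
        _ = B * B ^ (m-1) := by field_simp
        _ = B ^ m := by rw [← pow_succ']; congr 1; omega


lemma vseq_abs (hn : 1 ≤ n) (hα : ∀ k, α k ≠ 0) (hB1 : 1 ≤ B)
    (hBn : (∑ k : Fin (n+1), |α k|) ≤ B * |α (Fin.last n)|)
    (hB0 : (∑ k : Fin (n+1), |α k|) ≤ B * |α 0|) (i : ℕ) :
    |vseq n α i| ≤ B ^ (n - 1 + i) := by
  induction i using Nat.strong_induction_on with
  | _ i ih =>
    by_cases hi : i = 0
    · subst hi
      rw [vseq, if_pos rfl]
      exact (useq_abs hn hα hB1 hBn 0).trans (pow_le_pow_right₀ hB1 (Nat.zero_le _))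
    · have ha0 : (0:ℝ) < |α 0| := abs_pos.2 (hα 0)
      have hi1 : 1 ≤ i := by omega
      set e := n - 1 + i - 1 with he
      rw [vseq, if_neg hi, abs_mul, abs_neg, abs_inv]
      have hbr : ∀ k : Fin n,
          |(if i ≤ (k:ℕ)+1 then useq n α ((k:ℕ)+1 - i) else vseq n α (i - ((k:ℕ)+1)))|
            ≤ B ^ e := by
        intro k
        by_cases hk : i ≤ (k:ℕ)+1
        · rw [if_pos hk]
          exact (useq_abs hn hα hB1 hBn _).trans
            (pow_le_pow_right₀ hB1 (by have := k.isLt; omega))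
        · rw [if_neg hk]
          exact (ih (i - ((k:ℕ)+1)) (by omega)).trans
            (pow_le_pow_right₀ hB1 (by have := k.isLt; omega))
      have hstep : |∑ k : Fin n, α k.succ *
          (if i ≤ (k:ℕ)+1 then useq n α ((k:ℕ)+1 - i) else vseq n α (i - ((k:ℕ)+1)))|
          ≤ (∑ k : Fin (n+1), |α k|) * B ^ e := by
        refine (Finset.abs_sum_le_sum_abs _ _).trans ?_
        rw [Fin.sum_univ_succ (f := fun k => |α k|), add_mul, Finset.sum_mul]
        have h1 : ∀ k : Fin n, |α k.succ *
            (if i ≤ (k:ℕ)+1 then useq n α ((k:ℕ)+1 - i) else vseq n α (i - ((k:ℕ)+1)))|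
            ≤ |α k.succ| * B ^ e := by
          intro k
          rw [abs_mul]
          exact mul_le_mul_of_nonneg_left (hbr k) (abs_nonneg _)
        refine (Finset.sum_le_sum fun k _ => h1 k).trans ?_
        have : (0:ℝ) ≤ |α 0| * B ^ e := by positivity
        linarith
      calc |α 0|⁻¹ * |∑ k : Fin n, α k.succ *
            (if i ≤ (k:ℕ)+1 then useq n α ((k:ℕ)+1 - i) else vseq n α (i - ((k:ℕ)+1)))|
          ≤ |α 0|⁻¹ * ((B * |α 0|) * B ^ e) := by
            refine mul_le_mul_of_nonneg_left (hstep.trans ?_) (by positivity)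
            exact mul_le_mul_of_nonneg_right hB0 (by positivity)
        _ = B * B ^ e := by field_simp
        _ = B ^ (n - 1 + i) := by rw [← pow_succ']; congr 1; omega

lemma cseq_abs (hn : 1 ≤ n) (hα : ∀ k, α k ≠ 0) (hB1 : 1 ≤ B)
    (hBn : (∑ k : Fin (n+1), |α k|) ≤ B * |α (Fin.last n)|)
    (hB0 : (∑ k : Fin (n+1), |α k|) ≤ B * |α 0|) (m : ℤ) :
    |cseq n α m| ≤ B ^ (n - 1 + m.natAbs) := by
  rcases le_or_gt 0 m with hm | hm
  · rw [cseq, if_pos hm]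
    exact (useq_abs hn hα hB1 hBn _).trans (pow_le_pow_right₀ hB1 (by omega))
  · rw [cseq, if_neg (by omega)]
    have h1 : (-m).toNat = m.natAbs := by omega
    rw [h1]
    exact vseq_abs hn hα hB1 hBn hB0 _

lemma annihilator (hn : 1 ≤ n) (hα : ∀ k, α k ≠ 0) (lam : Fin (n+1) → ℝ)
    (hrec : ∀ m : ℤ, ∑ k : Fin (n+1), lam k * cseq n α (m + ((k:ℕ):ℤ)) = 0)
    (j0 : Fin (n+1)) (hj0 : lam j0 = 0) : ∀ k, lam k = 0 := by
  set r := lam (Fin.last n) / α (Fin.last n) with hr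
  set mu : Fin (n+1) → ℝ := fun k => lam k - r * α k with hmu
  have hmurec : ∀ m : ℤ, ∑ k : Fin (n+1), mu k * cseq n α (m + ((k:ℕ):ℤ)) = 0 := by
    intro m
    have h1 := hrec m
    have h2 := cseq_rec hn hα m
    have : ∑ k : Fin (n+1), mu k * cseq n α (m + ((k:ℕ):ℤ))
        = (∑ k : Fin (n+1), lam k * cseq n α (m + ((k:ℕ):ℤ)))
          - r * ∑ k : Fin (n+1), α k * cseq n α (m + ((k:ℕ):ℤ)) := by
      rw [Finset.mul_sum, ← Finset.sum_sub_distrib]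
      exact Finset.sum_congr rfl fun k _ => by simp [hmu]; ring
    rw [this, h1, h2]; ring
  have hmulast : mu (Fin.last n) = 0 := by
    have := hα (Fin.last n)
    simp only [hmu, hr]
    field_simp
    ring
  have hmuzero : ∀ k, mu k = 0 := by
    by_contra hc
    push_neg at hc
    obtain ⟨k0, hk0⟩ := hc
    have hsne : (Finset.univ.filter (fun k => mu k ≠ 0)).Nonempty :=
      ⟨k0, Finset.mem_filter.2 ⟨Finset.mem_univ _, hk0⟩⟩
    obtain ⟨e, he, hemax⟩ := (Finset.univ.filter (fun k => mu k ≠ 0)).exists_max_image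
      Fin.val hsne
    have hene : mu e ≠ 0 := (Finset.mem_filter.1 he).2
    have helt : (e:ℕ) < n := by
      have h1 : e ≠ Fin.last n := fun h => hene (h ▸ hmulast)
      have h2 : (e:ℕ) ≠ n := fun h => h1 (Fin.ext h)
      have := e.isLt; omega
    have hkey := hmurec ((n:ℤ) - 1 - ((e:ℕ):ℤ))
    rw [Finset.sum_eq_single e] at hkey
    · have hidx : (n:ℤ) - 1 - ((e:ℕ):ℤ) + ((e:ℕ):ℤ) = (n:ℤ) - 1 := by ring
      rw [hidx, cseq_one hn, mul_one] at hkey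
      exact hene hkey
    · intro k _ hke
      have hkv : (k:ℕ) ≠ (e:ℕ) := fun h => hke (Fin.ext h)
      rcases lt_or_gt_of_ne hkv with hlt | hgt
      · have hidx : (n:ℤ) - 1 - ((e:ℕ):ℤ) + ((k:ℕ):ℤ) = ((n - 1 - (e:ℕ) + (k:ℕ) : ℕ) : ℤ) := by
          omega
        rw [hidx, cseq_window _ (by omega)]
        rw [if_neg (by omega)]
        ring
      · have : mu k = 0 := by
          by_contra hne2
          have := hemax k (Finset.mem_filter.2 ⟨Finset.mem_univ _, hne2⟩)
          omega
        rw [this]; ring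
    · intro h; exact absurd (Finset.mem_univ e) h
  intro k
  have hl : ∀ j, lam j = r * α j := by
    intro j
    have := hmuzero j
    simp only [hmu] at this
    linarith
  have hr0 : r = 0 := by
    have := hl j0
    rw [hj0] at this
    rcases mul_eq_zero.1 this.symm with h | h
    · exact h
    · exact absurd h (hα j0)
  rw [hl k, hr0, zero_mul]



def sg (j : ℤ) : ℝ := if 0 < j then 1 else if j < 0 then -1 else 0

lemma one_add_tanh_eq (y : ℝ) : 1 + Real.tanh y = Real.exp y / Real.cosh y := by
  rw [Real.tanh_eq_sinh_div_cosh, ← Real.cosh_add_sinh y]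
  field_simp [(Real.cosh_pos (x := y)).ne']

lemma one_add_tanh_nonneg (y : ℝ) : 0 ≤ 1 + Real.tanh y := by
  rw [one_add_tanh_eq]; positivity

lemma one_add_tanh_le (y : ℝ) : 1 + Real.tanh y ≤ 2 * Real.exp (2*y) := by
  rw [one_add_tanh_eq, div_le_iff₀ (Real.cosh_pos (x := y))]
  have h1 : Real.exp (2*y) * Real.exp (-y) = Real.exp y := by
    rw [← Real.exp_add]; ring_nf
  have h2 : Real.exp (-y) / 2 ≤ Real.cosh y := by
    rw [Real.cosh_eq]
    have := Real.exp_pos y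
    linarith
  nlinarith [Real.exp_pos (2*y), Real.exp_pos (-y), Real.cosh_pos (x := y)]

lemma one_sub_tanh_nonneg (y : ℝ) : 0 ≤ 1 - Real.tanh y := by
  have := one_add_tanh_nonneg (-y); rw [Real.tanh_neg] at this; linarith

lemma one_sub_tanh_le (y : ℝ) : 1 - Real.tanh y ≤ 2 * Real.exp (-(2*y)) := by
  have := one_add_tanh_le (-y); rw [Real.tanh_neg] at this
  calc 1 - Real.tanh y = 1 + Real.tanh (-y) := by rw [Real.tanh_neg]; ring
    _ ≤ 2 * Real.exp (2 * (-y)) := one_add_tanh_le (-y)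
    _ = 2 * Real.exp (-(2*y)) := by ring_nf

lemma abs_tanh_le_one (y : ℝ) : |Real.tanh y| ≤ 1 := by
  rw [abs_le]
  constructor
  · have := one_add_tanh_nonneg y; linarith
  · have := one_sub_tanh_nonneg y; linarith

/-- Key pointwise bound for the terms of the series. -/
lemma sg_tanh_bound {X : ℝ} (hX : 0 < X) (j : ℤ) (t : ℝ) :
    |sg j + Real.tanh (X * (t - (j:ℝ)))| ≤
      2 * Real.exp (2*X*|t|) * Real.exp (-((2*X) * |(j:ℝ)|)) := by
  have hexp : 2 * Real.exp (2*X*|t|) * Real.exp (-((2*X) * |(j:ℝ)|))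
      = 2 * Real.exp (2*X*(|t| - |(j:ℝ)|)) := by
    rw [mul_assoc, ← Real.exp_add]; ring_nf
  rw [hexp]
  rcases lt_trichotomy j 0 with hj | hj | hj
  · have hsg : sg j = -1 := by simp [sg, hj, not_lt.2 hj.le]
    rw [hsg]
    have h1 : |(-1) + Real.tanh (X * (t - (j:ℝ)))| = 1 - Real.tanh (X * (t - (j:ℝ))) := by
      rw [abs_of_nonpos (by have := one_sub_tanh_nonneg (X * (t - (j:ℝ))); linarith)]
      ring
    rw [h1]
    refine (one_sub_tanh_le _).trans ?_
    have hje : |(j:ℝ)| = -(j:ℝ) := abs_of_neg (by exact_mod_cast hj)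
    have harg : -(2 * (X * (t - (j:ℝ)))) ≤ 2*X*(|t| - |(j:ℝ)|) := by
      rw [hje]
      have h2 : -t ≤ |t| := neg_le_abs t
      nlinarith
    gcongr
  · subst hj
    have hsg : sg 0 = 0 := by simp [sg]
    rw [hsg, zero_add]
    refine (abs_tanh_le_one _).trans ?_
    have h1 : (0:ℝ) ≤ 2*X*(|t| - |((0:ℤ):ℝ)|) := by simp; positivity
    have := Real.one_le_exp (x := 2*X*(|t| - |((0:ℤ):ℝ)|)) h1
    linarith
  · have hsg : sg j = 1 := by simp [sg, hj]
    rw [hsg]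
    have h1 : |1 + Real.tanh (X * (t - (j:ℝ)))| = 1 + Real.tanh (X * (t - (j:ℝ))) :=
      abs_of_nonneg (one_add_tanh_nonneg _)
    rw [h1]
    refine (one_add_tanh_le _).trans ?_
    have hje : |(j:ℝ)| = (j:ℝ) := abs_of_pos (by exact_mod_cast hj)
    have harg : 2 * (X * (t - (j:ℝ))) ≤ 2*X*(|t| - |(j:ℝ)|) := by
      rw [hje]
      have h2 : t ≤ |t| := le_abs_self t
      nlinarith
    gcongr

lemma tanh_diff_bound {X : ℝ} (hX : 0 < X) (j : ℤ) (hj : j ≠ 0) :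
    |Real.tanh (X * ((j:ℝ) + 1/2)) - Real.tanh (X * ((j:ℝ) - 1/2))| ≤
      4 * Real.exp (-(X * |(j:ℝ)|)) := by
  rcases lt_or_gt_of_ne hj with hj' | hj'
  · have hj1 : (j:ℝ) ≤ -1 := by
      have h8 : j + 1 ≤ 0 := by omega
      have h9 : ((j:ℝ)) + 1 ≤ 0 := by exact_mod_cast h8
      linarith
    have hje : |(j:ℝ)| = -(j:ℝ) := abs_of_neg (by linarith)
    have hA := one_add_tanh_nonneg (X * ((j:ℝ) + 1/2))
    have hB := one_add_tanh_nonneg (X * ((j:ℝ) - 1/2))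
    have hA' := one_add_tanh_le (X * ((j:ℝ) + 1/2))
    have hB' := one_add_tanh_le (X * ((j:ℝ) - 1/2))
    have h1 : Real.exp (2 * (X * ((j:ℝ) + 1/2))) ≤ Real.exp (-(X * |(j:ℝ)|)) := by
      rw [Real.exp_le_exp, hje]; nlinarith
    have h2 : Real.exp (2 * (X * ((j:ℝ) - 1/2))) ≤ Real.exp (-(X * |(j:ℝ)|)) := by
      rw [Real.exp_le_exp, hje]; nlinarith
    rw [abs_le]
    constructor <;> nlinarith
  · have hj1 : (1:ℝ) ≤ (j:ℝ) := by exact_mod_cast hj'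
    have hje : |(j:ℝ)| = (j:ℝ) := abs_of_pos (by linarith)
    have hA := one_sub_tanh_nonneg (X * ((j:ℝ) + 1/2))
    have hB := one_sub_tanh_nonneg (X * ((j:ℝ) - 1/2))
    have hA' := one_sub_tanh_le (X * ((j:ℝ) + 1/2))
    have hB' := one_sub_tanh_le (X * ((j:ℝ) - 1/2))
    have h1 : Real.exp (-(2 * (X * ((j:ℝ) + 1/2)))) ≤ Real.exp (-(X * |(j:ℝ)|)) := by
      rw [Real.exp_le_exp, hje]; nlinarith
    have h2 : Real.exp (-(2 * (X * ((j:ℝ) - 1/2)))) ≤ Real.exp (-(X * |(j:ℝ)|)) := by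
      rw [Real.exp_le_exp, hje]; nlinarith
    rw [abs_le]
    constructor <;> nlinarith

lemma two_tanh_ge_one {x : ℝ} (hx : 5 ≤ x) : 1 ≤ 2 * Real.tanh x := by
  have h2 : Real.exp (-(2*x)) ≤ 1/11 := by
    have h3 : (11:ℝ) ≤ Real.exp (2*x) := by
      calc (11:ℝ) ≤ 10 + 1 := by norm_num
        _ ≤ Real.exp 10 := Real.add_one_le_exp 10
        _ ≤ Real.exp (2*x) := by rw [Real.exp_le_exp]; linarith
    rw [Real.exp_neg, inv_le_comm₀ (Real.exp_pos _) (by norm_num)]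
    simpa using h3
  have := one_sub_tanh_le x
  linarith

lemma summable_exp_int {ε : ℝ} (hε : 0 < ε) :
    Summable (fun m : ℤ => Real.exp (-(ε * |(m:ℝ)|))) := by
  have hr0 : 0 ≤ Real.exp (-ε) := (Real.exp_pos _).le
  have hr1 : Real.exp (-ε) < 1 := by
    rw [← Real.exp_zero]; exact Real.exp_lt_exp.2 (by linarith)
  apply Summable.of_nat_of_neg
  · refine Summable.congr (summable_geometric_of_lt_one hr0 hr1) fun n => ?_
    rw [← Real.exp_nat_mul]
    congr 1
    push_cast
    rw [abs_of_nonneg (by positivity)]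
    ring
  · refine Summable.congr (summable_geometric_of_lt_one hr0 hr1) fun n => ?_
    rw [← Real.exp_nat_mul]
    congr 1
    push_cast
    rw [abs_neg, abs_of_nonneg (by positivity)]
    ring

lemma summable_of_expbound {f : ℤ → ℝ} {K ε : ℝ} (hε : 0 < ε)
    (h : ∀ m : ℤ, |f m| ≤ K * Real.exp (-(ε * |(m:ℝ)|))) : Summable f := by
  refine Summable.of_abs ?_
  exact Summable.of_nonneg_of_le (fun m => abs_nonneg _) h ((summable_exp_int hε).mul_left K)

lemma exp_invlemma : Real.exp (-(10:ℝ)) ≤ 1/11 := by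
  have h3 : (11:ℝ) ≤ Real.exp 10 := by
    calc (11:ℝ) ≤ 10 + 1 := by norm_num
      _ ≤ Real.exp 10 := Real.add_one_le_exp 10
  rw [Real.exp_neg, inv_le_comm₀ (Real.exp_pos _) (by norm_num)]
  simpa using h3

set_option maxHeartbeats 1000000 in
lemma tsum_tail_le {ε : ℝ} (hε : 10 ≤ ε) :
    Summable (fun j : ℤ => (if j = 0 then 0 else Real.exp (-(ε * |(j:ℝ)|)))) ∧
    ∑' j : ℤ, (if j = 0 then 0 else Real.exp (-(ε * |(j:ℝ)|))) ≤ 1/5 := by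
  have hε0 : (0:ℝ) < ε := by linarith
  set r := Real.exp (-ε) with hrdef
  have hr0 : 0 ≤ r := (Real.exp_pos _).le
  have hr1 : r < 1 := by
    rw [hrdef, ← Real.exp_zero]; exact Real.exp_lt_exp.2 (by linarith)
  have hr11 : r ≤ 1/11 := by
    rw [hrdef]
    refine le_trans ?_ exp_invlemma
    exact Real.exp_le_exp.2 (by linarith)
  set f : ℤ → ℝ := fun j => if j = 0 then 0 else Real.exp (-(ε * |(j:ℝ)|)) with hf
  have hfle : ∀ j, f j ≤ Real.exp (-(ε * |(j:ℝ)|)) := by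
    intro j
    by_cases h : j = 0
    · simp only [hf, if_pos h]
      positivity
    · simp only [hf, if_neg h]
      exact le_refl _
  have hfnn : ∀ j, 0 ≤ f j := by
    intro j
    by_cases h : j = 0
    · simp only [hf, if_pos h]
      exact le_refl _
    · simp only [hf, if_neg h]
      positivity
  have hsum : Summable f :=
    Summable.of_nonneg_of_le hfnn hfle (summable_exp_int hε0)
  refine ⟨hsum, ?_⟩
  have hnat : ∀ n : ℕ, f ((n:ℤ)) = if n = 0 then 0 else r ^ n := by
    intro n
    by_cases h : n = 0
    · simp [hf, h]
    · rw [hf]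
      simp only [if_neg h, if_neg (by exact_mod_cast h : ¬ ((n:ℤ) = 0))]
      rw [hrdef, ← Real.exp_nat_mul]
      congr 1
      push_cast
      rw [abs_of_nonneg (by positivity)]
      ring
  have hneg : ∀ n : ℕ, f (-((n:ℤ)+1)) = r ^ (n+1) := by
    intro n
    rw [hf]
    simp only [if_neg (by omega : ¬ (-((n:ℤ)+1) = 0))]
    rw [hrdef, ← Real.exp_nat_mul]
    congr 1
    push_cast
    rw [abs_neg, abs_of_nonneg (by positivity)]
    ring
  have hs1 : Summable (fun n : ℕ => f (n:ℤ)) := hsum.comp_injective (fun a b h => by omega)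
  have hs2 : Summable (fun n : ℕ => f (-((n:ℤ)+1))) := by
    have hinj : Function.Injective (fun n : ℕ => -((n:ℤ)+1)) := fun a b h => by
      simp only at h; omega
    exact hsum.comp_injective (i := fun n : ℕ => -((n:ℤ)+1)) hinj
  have hgeo : Summable (fun n : ℕ => r ^ n) := summable_geometric_of_lt_one hr0 hr1
  have hsplit : ∑' j : ℤ, f j = ∑' n : ℕ, f (n:ℤ) + ∑' n : ℕ, f (-((n:ℤ)+1)) :=
    tsum_of_nat_of_neg_add_one hs1 hs2
  have hgeoval : ∑' n : ℕ, r ^ (n+1) = r * (1-r)⁻¹ := by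
    have h1 : ∀ n : ℕ, r ^ (n+1) = r * r ^ n := fun n => by rw [pow_succ]; ring
    rw [show (fun n : ℕ => r ^ (n+1)) = fun n => r * r ^ n from funext h1]
    rw [tsum_mul_left, tsum_geometric_of_lt_one hr0 hr1]
  have hval1 : ∑' n : ℕ, f (n:ℤ) ≤ 1/10 := by
    rw [show (fun n : ℕ => f (n:ℤ)) = fun n => if n = 0 then 0 else r ^ n from funext hnat]
    have hzero : ((if 0 = 0 then (0:ℝ) else r ^ 0)) = 0 := by simp
    rw [Summable.tsum_eq_zero_add (by
      refine Summable.of_nonneg_of_le (fun n => ?_) (fun n => ?_) hgeo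
      · by_cases h : n = 0 <;> simp [h]; positivity
      · by_cases h : n = 0 <;> simp [h])]
    rw [hzero, zero_add]
    have : ∀ n : ℕ, (if n + 1 = 0 then (0:ℝ) else r ^ (n+1)) = r ^ (n+1) := by
      intro n; rw [if_neg (by omega)]
    rw [show (fun n : ℕ => if n + 1 = 0 then (0:ℝ) else r ^ (n+1)) = fun n => r ^ (n+1) from funext this]
    rw [hgeoval]
    have hinv : (1-r)⁻¹ ≤ (10/11:ℝ)⁻¹ := by
      apply inv_anti₀ (by norm_num) (by linarith)
    calc r * (1-r)⁻¹ ≤ (1/11) * (10/11:ℝ)⁻¹ := by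
          apply mul_le_mul hr11 hinv (inv_nonneg.2 (by linarith)) (by norm_num)
      _ ≤ 1/10 := by norm_num
  have hval2 : ∑' n : ℕ, f (-((n:ℤ)+1)) ≤ 1/10 := by
    rw [show (fun n : ℕ => f (-((n:ℤ)+1))) = fun n => r ^ (n+1) from funext hneg]
    rw [hgeoval]
    have hinv : (1-r)⁻¹ ≤ (10/11:ℝ)⁻¹ := by
      apply inv_anti₀ (by norm_num) (by linarith)
    calc r * (1-r)⁻¹ ≤ (1/11) * (10/11:ℝ)⁻¹ := by
          apply mul_le_mul hr11 hinv (inv_nonneg.2 (by linarith)) (by norm_num)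
      _ ≤ 1/10 := by norm_num
  rw [hsplit]
  linarith

def gfun (c : ℤ → ℝ) (X : ℝ) (j : ℤ) (t : ℝ) : ℝ :=
  c j * (sg j + Real.tanh (X * (t - (j:ℝ))))

lemma gfun_bound {c : ℤ → ℝ} {X L K : ℝ} (hX : 0 < X)
    (hK : ∀ m : ℤ, |c m| ≤ K * Real.exp (L * |(m:ℝ)|)) (j : ℤ) (t : ℝ) :
    |gfun c X j t| ≤ (2 * K * Real.exp (2*X*|t|)) * Real.exp (-((2*X - L) * |(j:ℝ)|)) := by
  have hK0 : 0 ≤ K := by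
    have := abs_nonneg (c 0)
    have h0 := hK 0
    simp at h0
    linarith
  rw [gfun, abs_mul]
  have hmerge : Real.exp (L * |(j:ℝ)|) * Real.exp (-((2*X) * |(j:ℝ)|))
      = Real.exp (-((2*X - L) * |(j:ℝ)|)) := by
    rw [← Real.exp_add]; ring_nf
  calc |c j| * |sg j + Real.tanh (X * (t - (j:ℝ)))|
      ≤ (K * Real.exp (L * |(j:ℝ)|)) * (2 * Real.exp (2*X*|t|) * Real.exp (-((2*X) * |(j:ℝ)|))) := by
        apply mul_le_mul (hK j) (sg_tanh_bound hX j t) (abs_nonneg _) (by positivity)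
    _ = (2 * K * Real.exp (2*X*|t|)) * (Real.exp (L * |(j:ℝ)|) * Real.exp (-((2*X) * |(j:ℝ)|))) := by
        ring
    _ = (2 * K * Real.exp (2*X*|t|)) * Real.exp (-((2*X - L) * |(j:ℝ)|)) := by rw [hmerge]

lemma summable_gfun {c : ℤ → ℝ} {X L K : ℝ} (hX : 0 < X) (hLX : L < 2*X)
    (hK : ∀ m : ℤ, |c m| ≤ K * Real.exp (L * |(m:ℝ)|)) (t : ℝ) :
    Summable (fun j : ℤ => gfun c X j t) :=
  summable_of_expbound (K := 2 * K * Real.exp (2*X*|t|)) (ε := 2*X - L) (by linarith)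
    (fun j => gfun_bound hX hK j t)

set_option maxHeartbeats 1000000 in
lemma vanish {d : ℤ → ℝ} {X L K : ℝ} (hL : 0 < L) (hXdef : X = 2*L + 10)
    (hd : ∀ m : ℤ, |d m| ≤ K * Real.exp (L * |(m:ℝ)|))
    (hG : ∀ t₁ t₂ : ℝ, ∑' m : ℤ, gfun d X m t₁ = ∑' m : ℤ, gfun d X m t₂) :
    ∀ m, d m = 0 := by
  have hX : 0 < X := by rw [hXdef]; linarith
  have hLX : L < 2*X := by rw [hXdef]; linarith
  have hGs : ∀ t : ℝ, Summable (fun m : ℤ => gfun d X m t) := fun t => summable_gfun hX hLX hd t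
  set ε := X - L with hεdef
  have hε10 : 10 ≤ ε := by rw [hεdef, hXdef]; linarith
  set Q : ℤ → ℝ := fun m => |d m| * Real.exp (-(L * |(m:ℝ)|)) with hQ
  have hQbd : ∀ m, Q m ≤ K := by
    intro m
    calc Q m ≤ (K * Real.exp (L * |(m:ℝ)|)) * Real.exp (-(L * |(m:ℝ)|)) := by
          exact mul_le_mul_of_nonneg_right (hd m) (Real.exp_pos _).le
      _ = K := by rw [mul_assoc, ← Real.exp_add]; simp
  have hbdd : BddAbove (Set.range Q) := ⟨K, by rintro x ⟨m, rfl⟩; exact hQbd m⟩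
  set D := sSup (Set.range Q) with hDdef
  have hDub : ∀ m, Q m ≤ D := fun m => le_csSup hbdd ⟨m, rfl⟩
  have hQnn : ∀ m, 0 ≤ Q m := fun m => by rw [hQ]; positivity
  have hD0 : 0 ≤ D := le_trans (hQnn 0) (hDub 0)
  have hdm : ∀ m : ℤ, |d m| ≤ D * Real.exp (L * |(m:ℝ)|) := by
    intro m
    have h1 := hDub m
    rw [hQ] at h1
    have h2 := mul_le_mul_of_nonneg_right h1 (Real.exp_pos (L * |(m:ℝ)|)).le
    calc |d m| = |d m| * Real.exp (-(L * |(m:ℝ)|)) * Real.exp (L * |(m:ℝ)|) := by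
          rw [mul_assoc, ← Real.exp_add]; simp
      _ ≤ D * Real.exp (L * |(m:ℝ)|) := h2
  have key : ∀ m0 : ℤ, Q m0 ≤ (4/5) * D := by
    intro m0
    set t1 : ℝ := (m0:ℝ) + 1/2 with ht1
    set t2 : ℝ := (m0:ℝ) - 1/2 with ht2
    set u : ℤ → ℝ := fun m =>
      d m * (Real.tanh (X*(t1 - (m:ℝ))) - Real.tanh (X*(t2 - (m:ℝ)))) with hu
    have hueq : u = fun m => gfun d X m t1 - gfun d X m t2 := by
      funext m; rw [hu]; simp only [gfun]; ring
    have hus : Summable u := by rw [hueq]; exact (hGs t1).sub (hGs t2)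
    have hut : ∑' m, u m = 0 := by
      rw [hueq, Summable.tsum_sub (hGs t1) (hGs t2), hG t1 t2, sub_self]
    have hsplit := Summable.tsum_eq_add_tsum_ite hus m0
    rw [hut] at hsplit
    set v : ℤ → ℝ := fun m => if m = m0 then 0 else u m with hv
    have hvs : Summable v := by
      have h1 : Summable (fun m : ℤ => if m = m0 then u m else 0) := by
        apply summable_of_ne_finset_zero (s := {m0})
        intro b hb
        rw [if_neg (by simpa using hb)]
      have h2 : v = fun m => u m - (if m = m0 then u m else 0) := by
        funext m; by_cases h : m = m0 <;> simp [hv, h]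
      rw [h2]; exact hus.sub h1
    have hum0 : |u m0| ≤ ∑' m, |v m| := by
      have h1 : u m0 = -∑' m, v m := by
        rw [hv]; linarith [hsplit]
      rw [h1, abs_neg]
      simpa using norm_tsum_le_tsum_norm (f := v) (by simpa [Real.norm_eq_abs] using hvs.abs)
    set c1 : ℝ := 4 * (D * Real.exp (L * |(m0:ℝ)|)) with hc1
    have hc1nn : 0 ≤ c1 := by rw [hc1]; positivity
    set w : ℤ → ℝ := fun m =>
      c1 * (if m - m0 = 0 then 0 else Real.exp (-(ε * |((m - m0 : ℤ):ℝ)|))) with hw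
    have hvw : ∀ m, |v m| ≤ w m := by
      intro m
      by_cases h : m = m0
      · simp only [hv, hw]
        simp [h]
      · simp only [hv, hw]
        rw [if_neg h, if_neg (by omega : ¬ (m - m0 = 0))]
        set j : ℤ := m0 - m with hj
        have hjne : j ≠ 0 := by omega
        have harg1 : X*(t1 - (m:ℝ)) = X * ((j:ℝ) + 1/2) := by
          rw [ht1, hj]; push_cast; ring
        have harg2 : X*(t2 - (m:ℝ)) = X * ((j:ℝ) - 1/2) := by
          rw [ht2, hj]; push_cast; ring
        have habs : |((m - m0 : ℤ):ℝ)| = |(j:ℝ)| := by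
          rw [hj]; push_cast; rw [← abs_neg]; congr 1; ring
        rw [hu, abs_mul, harg1, harg2, habs]
        have hmm0 : |(m:ℝ)| ≤ |(m0:ℝ)| + |(j:ℝ)| := by
          have h1 : (m:ℝ) = (m0:ℝ) + (-(j:ℝ)) := by rw [hj]; push_cast; ring
          calc |(m:ℝ)| = |(m0:ℝ) + (-(j:ℝ))| := by rw [← h1]
            _ ≤ |(m0:ℝ)| + |(-(j:ℝ))| := abs_add_le _ _
            _ = |(m0:ℝ)| + |(j:ℝ)| := by rw [abs_neg]
        have hexpm : Real.exp (L * |(m:ℝ)|) ≤ Real.exp (L * |(m0:ℝ)|) * Real.exp (L * |(j:ℝ)|) := by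
          rw [← Real.exp_add]
          apply Real.exp_le_exp.2
          nlinarith
        calc |d m| * |Real.tanh (X * ((j:ℝ) + 1/2)) - Real.tanh (X * ((j:ℝ) - 1/2))|
            ≤ (D * Real.exp (L * |(m:ℝ)|)) * (4 * Real.exp (-(X * |(j:ℝ)|))) := by
              apply mul_le_mul (hdm m) (tanh_diff_bound hX j hjne) (abs_nonneg _) (by positivity)
          _ ≤ (D * (Real.exp (L * |(m0:ℝ)|) * Real.exp (L * |(j:ℝ)|))) * (4 * Real.exp (-(X * |(j:ℝ)|))) := by
              have h4 : (0:ℝ) ≤ 4 * Real.exp (-(X * |(j:ℝ)|)) := by positivity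
              apply mul_le_mul_of_nonneg_right _ h4
              exact mul_le_mul_of_nonneg_left hexpm hD0
          _ = c1 * (Real.exp (L * |(j:ℝ)|) * Real.exp (-(X * |(j:ℝ)|))) := by rw [hc1]; ring
          _ = c1 * Real.exp (-(ε * |(j:ℝ)|)) := by
              congr 1
              rw [← Real.exp_add, hεdef]; ring_nf
    have hftail := tsum_tail_le (ε := ε) hε10
    have hws : Summable w := by
      rw [hw]
      apply Summable.mul_left
      have hinj : Function.Injective (fun m : ℤ => m - m0) := fun a b h => by
        simp only at h; omega
      have := hftail.1.comp_injective (i := fun m : ℤ => m - m0) hinj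
      exact this
    have h5 : ∑' m, |v m| ≤ ∑' m, w m := Summable.tsum_le_tsum hvw hvs.abs hws
    have h6 : ∑' m, w m ≤ c1 * (1/5) := by
      rw [hw, tsum_mul_left]
      apply mul_le_mul_of_nonneg_left _ hc1nn
      have hre : ∑' (m : ℤ), (if m - m0 = 0 then (0:ℝ) else Real.exp (-(ε * |((m - m0 : ℤ):ℝ)|)))
          = ∑' (j : ℤ), (if j = 0 then (0:ℝ) else Real.exp (-(ε * |(j:ℝ)|))) := by
        exact Equiv.tsum_eq (Equiv.subRight m0)
          (fun j => if j = 0 then (0:ℝ) else Real.exp (-(ε * |(j:ℝ)|)))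
      rw [hre]
      exact hftail.2
    have hlow : |d m0| ≤ |u m0| := by
      have ha1 : X*(t1 - (m0:ℝ)) = X * (1/2) := by rw [ht1]; ring
      have ha2 : X*(t2 - (m0:ℝ)) = -(X * (1/2)) := by rw [ht2]; ring
      have htanh2 : (1:ℝ) ≤ 2 * Real.tanh (X * (1/2)) := by
        apply two_tanh_ge_one
        rw [hXdef]; nlinarith
      have hdiff : Real.tanh (X*(t1 - (m0:ℝ))) - Real.tanh (X*(t2 - (m0:ℝ)))
          = 2 * Real.tanh (X * (1/2)) := by
        rw [ha1, ha2, Real.tanh_neg]; ring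
      rw [hu, abs_mul, hdiff]
      have h1 : |2 * Real.tanh (X * (1/2))| = 2 * Real.tanh (X * (1/2)) :=
        abs_of_nonneg (by linarith)
      rw [h1]
      nlinarith [abs_nonneg (d m0)]
    have hfinal : |d m0| ≤ (4/5) * (D * Real.exp (L * |(m0:ℝ)|)) := by
      have := le_trans hlow (le_trans hum0 (le_trans h5 h6))
      rw [hc1] at this
      linarith
    rw [hQ]
    calc |d m0| * Real.exp (-(L * |(m0:ℝ)|))
        ≤ ((4/5) * (D * Real.exp (L * |(m0:ℝ)|))) * Real.exp (-(L * |(m0:ℝ)|)) :=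
          mul_le_mul_of_nonneg_right hfinal (Real.exp_pos _).le
      _ = (4/5) * D * (Real.exp (L * |(m0:ℝ)|) * Real.exp (-(L * |(m0:ℝ)|))) := by ring
      _ = (4/5) * D := by rw [← Real.exp_add]; simp
  have hD45 : D ≤ (4/5) * D := by
    rw [hDdef]
    refine csSup_le ⟨Q 0, ⟨0, rfl⟩⟩ ?_
    rintro x ⟨m, rfl⟩
    exact key m
  have hDzero : D = 0 := by linarith
  intro m
  have h1 := hDub m
  rw [hDzero] at h1
  have h2 : Q m = 0 := le_antisymm h1 (hQnn m)
  rw [hQ] at h2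
  rcases mul_eq_zero.1 h2 with h3 | h3
  · exact abs_eq_zero.1 h3
  · exact absurd h3 (Real.exp_pos _).ne'

set_option maxHeartbeats 2000000 in
lemma shift_eq {c : ℤ → ℝ} {X L K : ℝ} (hX : 0 < X) (hLX : L < 2*X)
    (hK : ∀ m : ℤ, |c m| ≤ K * Real.exp (L * |(m:ℝ)|))
    {n : ℕ} (w : Fin (n+1) → ℝ) (t : ℝ) :
    ∑ k : Fin (n+1), w k * (∑' j : ℤ, gfun c X j (t + ((k:ℕ):ℝ)))
      = ∑' m : ℤ, ∑ k : Fin (n+1), w k *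
          (c (m + ((k:ℕ):ℤ)) * (sg (m + ((k:ℕ):ℤ)) + Real.tanh (X * (t - (m:ℝ))))) := by
  have heq : ∀ (k : Fin (n+1)) (m : ℤ), gfun c X (m + ((k:ℕ):ℤ)) (t + ((k:ℕ):ℝ))
      = c (m + ((k:ℕ):ℤ)) * (sg (m + ((k:ℕ):ℤ)) + Real.tanh (X * (t - (m:ℝ)))) := by
    intro k m
    rw [gfun]
    congr 3
    push_cast
    ring
  have hshift : ∀ k : Fin (n+1),
      Summable (fun m : ℤ => gfun c X (m + ((k:ℕ):ℤ)) (t + ((k:ℕ):ℝ))) := by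
    intro k
    exact (Equiv.summable_iff (Equiv.addRight ((k:ℕ):ℤ))).2 (summable_gfun hX hLX hK _)
  have hsum : ∀ k ∈ (Finset.univ : Finset (Fin (n+1))), Summable (fun m : ℤ =>
      w k * (c (m + ((k:ℕ):ℤ)) * (sg (m + ((k:ℕ):ℤ)) + Real.tanh (X * (t - (m:ℝ)))))) := by
    intro k _
    exact (((hshift k).congr (heq k))).mul_left (w k)
  rw [Summable.tsum_finsetSum hsum]
  refine Finset.sum_congr rfl (fun k _ => ?_)
  have e1 : ∑' (m : ℤ), gfun c X (m + ((k:ℕ):ℤ)) (t + ((k:ℕ):ℝ))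
      = ∑' (j : ℤ), gfun c X j (t + ((k:ℕ):ℝ)) :=
    Equiv.tsum_eq (Equiv.addRight ((k:ℕ):ℤ)) (fun j => gfun c X j (t + ((k:ℕ):ℝ)))
  rw [← e1, ← tsum_mul_left]
  exact tsum_congr (fun m => by rw [heq k m])

lemma linIndepSet_of (ρ : ℝ → ℝ) {ι : Type} (β γ : ι → ℝ) (I' : Finset ι)
    (h : ∀ (μ : ℝ) (lam : ι → ℝ), (∀ s ∉ I', lam s = 0) →
      (∀ t : ℝ, μ + ∑ s ∈ I', lam s * ρ (β s * t + γ s) = 0) →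
      μ = 0 ∧ ∀ s, lam s = 0) :
    LinIndepSet (insert (fun _ : ℝ => (1 : ℝ))
      ((fun s => fun t : ℝ => ρ (β s * t + γ s)) '' (I' : Set ι))) := by
  classical
  set φ : ι → (ℝ → ℝ) := fun s => fun t : ℝ => ρ (β s * t + γ s) with hφ
  set F : Option {x // x ∈ I'} → (ℝ → ℝ) :=
    fun o => o.elim (fun _ => 1) (fun x => φ x.1) with hF
  have hrange : Set.range F = insert (fun _ : ℝ => (1 : ℝ)) (φ '' (I' : Set ι)) := by
    ext g
    constructor
    · rintro ⟨o, rfl⟩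
      cases o with
      | none => exact Set.mem_insert _ _
      | some x => exact Set.mem_insert_of_mem _ ⟨x.1, Finset.mem_coe.2 x.2, rfl⟩
    · intro hg
      rcases Set.mem_insert_iff.1 hg with h1 | ⟨s, hs, rfl⟩
      · exact ⟨none, h1.symm⟩
      · exact ⟨some ⟨s, Finset.mem_coe.1 hs⟩, rfl⟩
  rw [LinIndepSet, ← hrange]
  have hFind : LinearIndependent ℝ F := by
    rw [Fintype.linearIndependent_iff]
    intro gc hgc
    set lam : ι → ℝ := fun s => if hs : s ∈ I' then gc (some ⟨s, hs⟩) else 0 with hlam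
    have hlam0 : ∀ s ∉ I', lam s = 0 := fun s hs => by rw [hlam]; exact dif_neg hs
    have hpt : ∀ t : ℝ, gc none + ∑ s ∈ I', lam s * ρ (β s * t + γ s) = 0 := by
      intro t
      have h0 := congrFun hgc t
      simp only [Finset.sum_apply, Pi.smul_apply, smul_eq_mul, Pi.zero_apply] at h0
      rw [Fintype.sum_option] at h0
      have h1 : ∀ x : {x // x ∈ I'}, gc (some x) * F (some x) t
          = lam x.1 * ρ (β x.1 * t + γ x.1) := by
        intro x
        have h2 : lam x.1 = gc (some x) := by
          simp only [hlam]
          rw [dif_pos x.2]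
        rw [h2]
        rfl
      have h2 : ∑ x : {x // x ∈ I'}, gc (some x) * F (some x) t
          = ∑ s ∈ I', lam s * ρ (β s * t + γ s) := by
        rw [← Finset.sum_coe_sort I' (fun s => lam s * ρ (β s * t + γ s))]
        exact Finset.sum_congr rfl (fun x _ => h1 x)
      rw [h2] at h0
      have h3 : F none t = 1 := rfl
      rw [h3, mul_one] at h0
      exact h0
    obtain ⟨hμ, hlamz⟩ := h (gc none) lam hlam0 hpt
    intro i
    cases i with
    | none => exact hμ
    | some x =>
      have h4 := hlamz x.1
      simp only [hlam] at h4
      rw [dif_pos x.2] at h4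
      exact h4
  exact (linearIndepOn_id_range_iff hFind.injective).mpr hFind

/-- **Exotic affine symmetries in `Z_{1,b}`.** For arbitrary nonzero reals
`α₀, …, α_n` with `n ≥ 1`, there exist `b > 0`, `ζ ∈ ℝ`, and a real-valued
`σ ∈ Z_{1,b}` such that `(ζ, {(α_k, 1, k)}_{k=0}^n)` is an affine symmetry of the
restriction of `σ` to `ℝ`. -/
theorem zab_exotic_symmetry (n : ℕ) (hn : 1 ≤ n) (α : Fin (n + 1) → ℝ)
    (hα : ∀ k, α k ≠ 0) :
    ∃ b : ℝ, 0 < b ∧ ∃ (ζ : ℝ) (σ : ℂ → ℂ), MemZab 1 b σ ∧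
      (∀ t : ℝ, (σ ↑t).im = 0) ∧
      IsAffineSymmetry (fun t : ℝ => (σ ↑t).re) (Finset.univ : Finset (Fin (n + 1)))
        ζ α (fun _ => 1) (fun k => ((k : ℕ) : ℝ)) := by
  classical
  set S : ℝ := ∑ k : Fin (n+1), |α k| with hS
  have ha0 : (0:ℝ) < |α 0| := abs_pos.2 (hα 0)
  have hal : (0:ℝ) < |α (Fin.last n)| := abs_pos.2 (hα _)
  have hSpos : (0:ℝ) < S := by
    rw [hS]
    exact Finset.sum_pos' (fun k _ => abs_nonneg _) ⟨0, Finset.mem_univ 0, ha0⟩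
  set B : ℝ := 2 + S * (|α 0|⁻¹ + |α (Fin.last n)|⁻¹) with hB
  have hB2 : 2 ≤ B := by
    have h1 : 0 ≤ S * (|α 0|⁻¹ + |α (Fin.last n)|⁻¹) := by positivity
    rw [hB]; linarith
  have hB1 : 1 ≤ B := by linarith
  have hBn : S ≤ B * |α (Fin.last n)| := by
    have h1 : S * |α (Fin.last n)|⁻¹ ≤ B := by
      have h2 : 0 ≤ S * |α 0|⁻¹ := by positivity
      rw [hB]; nlinarith
    calc S = S * |α (Fin.last n)|⁻¹ * |α (Fin.last n)| := by field_simp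
      _ ≤ B * |α (Fin.last n)| := mul_le_mul_of_nonneg_right h1 hal.le
  have hB0 : S ≤ B * |α 0| := by
    have h1 : S * |α 0|⁻¹ ≤ B := by
      have h2 : 0 ≤ S * |α (Fin.last n)|⁻¹ := by positivity
      rw [hB]; nlinarith
    calc S = S * |α 0|⁻¹ * |α 0| := by field_simp
      _ ≤ B * |α 0| := mul_le_mul_of_nonneg_right h1 ha0.le
  set L : ℝ := Real.log B with hLdef
  have hL : 0 < L := Real.log_pos (by linarith)
  have hexpL : Real.exp L = B := Real.exp_log (by linarith)
  set X : ℝ := 2*L + 10 with hXdef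
  have hX : 0 < X := by rw [hXdef]; linarith
  have hLX : L < 2*X := by rw [hXdef]; linarith
  set b : ℝ := Real.pi / X with hbdef
  have hb : 0 < b := div_pos Real.pi_pos hX
  have hXb : Real.pi / b = X := by
    rw [hbdef]
    field_simp
  set c : ℤ → ℝ := cseq n α with hc
  set K : ℝ := B ^ (n-1) with hKdef
  have hK1 : (1:ℝ) ≤ K := by rw [hKdef]; exact one_le_pow₀ hB1
  have hK0 : (0:ℝ) ≤ K := by linarith
  have hexpk : ∀ j : ℕ, Real.exp (L * j) = B ^ j := by
    intro j
    rw [mul_comm, Real.exp_nat_mul, hexpL]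
  have hK : ∀ m : ℤ, |c m| ≤ K * Real.exp (L * |(m:ℝ)|) := by
    intro m
    have habsR : |(m:ℝ)| = ((m.natAbs : ℕ) : ℝ) := by
      rw [Nat.cast_natAbs]
      norm_num
    calc |c m| ≤ B ^ (n - 1 + m.natAbs) := by
          rw [hc]; exact cseq_abs hn hα hB1 hBn hB0 m
      _ = K * B ^ m.natAbs := by rw [hKdef, pow_add]
      _ = K * Real.exp (L * |(m:ℝ)|) := by rw [habsR, hexpk m.natAbs]
  have hgsum : ∀ t : ℝ, Summable (fun j : ℤ => gfun c X j t) :=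
    fun t => summable_gfun hX hLX hK t
  set cC : ℤ → ℂ := fun j => ((c j : ℝ) : ℂ) with hcC
  set σ : ℂ → ℂ := fun z => (0:ℂ) + ∑' k : ℤ, zabTerm 1 b cC k z with hσdef
  have hbridge : ∀ t : ℝ, σ ((t:ℝ):ℂ) = (((∑' j : ℤ, gfun c X j t : ℝ)) : ℂ) := by
    intro t
    rw [hσdef]
    simp only [zero_add]
    have hterm : ∀ k : ℤ, zabTerm 1 b cC k ((t:ℝ):ℂ) = ((gfun c X k t : ℝ) : ℂ) := by
      intro k
      rw [zabTerm, gfun]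
      have h1 : ((Real.pi / b : ℝ) : ℂ) * (((t:ℝ):ℂ) - (k:ℂ) * ((1:ℝ):ℂ))
          = ((X * (t - (k:ℝ)) : ℝ) : ℂ) := by
        rw [hXb]
        push_cast
        ring
      rw [h1, ← Complex.ofReal_tanh]
      have h2 : sgnz k = ((sg k : ℝ) : ℂ) := by
        rw [sgnz, sg]
        split_ifs <;> simp
      rw [h2, hcC]
      push_cast
      ring
    rw [tsum_congr hterm]
    have h3 := (Complex.ofRealCLM.map_tsum (hgsum t)).symm
    simpa using h3
  have him : ∀ t : ℝ, (σ ↑t).im = 0 := fun t => by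
    rw [hbridge t]; exact Complex.ofReal_im _
  have hρ : ∀ t : ℝ, (σ ↑t).re = ∑' j : ℤ, gfun c X j t := fun t => by
    rw [hbridge t]; exact Complex.ofReal_re _
  set E : ℤ → ℝ := fun m => ∑ k : Fin (n+1),
    α k * (c (m + ((k:ℕ):ℤ)) * sg (m + ((k:ℕ):ℤ))) with hE
  refine ⟨b, hb, ∑' m : ℤ, E m, σ, ?_, him, ?_⟩
  · -- MemZab
    refine ⟨0, cC, ⟨1/2, ⟨by norm_num, by norm_num⟩, K, ?_⟩, ⟨(n:ℤ)-1, ?_⟩, ?_⟩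
    · intro k
      have hnorm : ‖cC k‖ = |c k| := by
        rw [hcC]
        simp [Complex.norm_real]
      have hexpo : -(Real.pi * (1/2) * |(k:ℝ)|) / b = -((X/2) * |(k:ℝ)|) := by
        have h4 : Real.pi * (1/2) * |(k:ℝ)| / b = (Real.pi / b) * ((1/2) * |(k:ℝ)|) := by
          ring
        rw [neg_div, h4, hXb]
        ring
      rw [hnorm, hexpo]
      calc |c k| * Real.exp (-(X/2 * |(k:ℝ)|))
          ≤ (K * Real.exp (L * |(k:ℝ)|)) * Real.exp (-(X/2 * |(k:ℝ)|)) :=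
            mul_le_mul_of_nonneg_right (hK k) (Real.exp_pos _).le
        _ = K * Real.exp (L * |(k:ℝ)| + -(X/2 * |(k:ℝ)|)) := by
            rw [mul_assoc, ← Real.exp_add]
        _ ≤ K * 1 := by
            refine mul_le_mul_of_nonneg_left ?_ hK0
            calc Real.exp (L * |(k:ℝ)| + -(X/2 * |(k:ℝ)|))
                ≤ Real.exp 0 := by
                  apply Real.exp_le_exp.2
                  rw [hXdef]
                  nlinarith [abs_nonneg ((k:ℝ))]
              _ = 1 := Real.exp_zero
        _ = K := mul_one K
    · show cC ((n:ℤ)-1) ≠ 0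
      simp only [hcC]
      have h5 : c ((n:ℤ)-1) = 1 := by rw [hc]; exact cseq_one hn
      rw [h5]
      norm_num
    · exact hσdef
  · -- IsAffineSymmetry
    refine ⟨⟨0, Finset.mem_univ 0⟩, ?_, ?_⟩
    · -- functional equation
      intro t
      simp only [one_mul, hρ]
      rw [shift_eq hX hLX hK α t]
      refine tsum_congr (fun m => ?_)
      have hrec : ∑ k : Fin (n+1), α k * c (m + ((k:ℕ):ℤ)) = 0 := by
        rw [hc]; exact cseq_rec hn hα m
      have hsplit : ∑ k : Fin (n+1), α k *
            (c (m + ((k:ℕ):ℤ)) * (sg (m + ((k:ℕ):ℤ)) + Real.tanh (X * (t - (m:ℝ)))))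
          = E m + Real.tanh (X * (t - (m:ℝ))) * ∑ k : Fin (n+1), α k * c (m + ((k:ℕ):ℤ)) := by
        rw [hE, Finset.mul_sum, ← Finset.sum_add_distrib]
        exact Finset.sum_congr rfl (fun k _ => by ring)
      rw [hsplit, hrec, mul_zero, add_zero]
    · -- independence
      intro I' hI'
      obtain ⟨j0, hj0u, hj0not⟩ := Finset.exists_of_ssubset hI'
      refine linIndepSet_of (fun t : ℝ => (σ ↑t).re) (fun _ => (1:ℝ))
        (fun k : Fin (n+1) => ((k:ℕ):ℝ)) I' ?_
      intro μ lam hlam0 hpt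
      set d : ℤ → ℝ := fun m => ∑ k : Fin (n+1), lam k * c (m + ((k:ℕ):ℤ)) with hd
      set hfin : ℤ → ℝ := fun m => ∑ k : Fin (n+1),
        lam k * (c (m + ((k:ℕ):ℤ)) * (sg (m + ((k:ℕ):ℤ)) - sg m)) with hhfin
      have hptU : ∀ t : ℝ, μ + ∑ s : Fin (n+1),
          lam s * (∑' j : ℤ, gfun c X j (t + ((s:ℕ):ℝ))) = 0 := by
        intro t
        have h1 := hpt t
        rw [Finset.sum_subset (Finset.subset_univ I')
          (fun s _ hs => by rw [hlam0 s hs, zero_mul])] at h1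
        simp only [one_mul, hρ] at h1
        exact h1
      have hdecomp : ∀ (m : ℤ) (t : ℝ), ∑ k : Fin (n+1), lam k *
            (c (m + ((k:ℕ):ℤ)) * (sg (m + ((k:ℕ):ℤ)) + Real.tanh (X * (t - (m:ℝ)))))
          = gfun d X m t + hfin m := by
        intro m t
        rw [gfun, hd, hhfin, Finset.sum_mul, ← Finset.sum_add_distrib]
        exact Finset.sum_congr rfl (fun k _ => by ring)
      have hfin0 : ∀ m ∉ Finset.Icc (-(n:ℤ)) 0, hfin m = 0 := by
        intro m hm
        rw [hhfin]
        apply Finset.sum_eq_zero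
        intro k _
        have hk : ((k:ℕ):ℤ) ≤ (n:ℤ) := by
          have := k.isLt; omega
        have hk0 : (0:ℤ) ≤ ((k:ℕ):ℤ) := by positivity
        have hm' : m < -(n:ℤ) ∨ 0 < m := by
          simp only [Finset.mem_Icc, not_and_or, not_le] at hm
          omega
        have hsg : sg (m + ((k:ℕ):ℤ)) = sg m := by
          rw [sg, sg]
          split_ifs <;> first | rfl | (exfalso; omega)
        rw [hsg, sub_self, mul_zero, mul_zero]
      have hfinsum : Summable hfin :=
        summable_of_ne_finset_zero hfin0
      set A : ℝ := ∑ k : Fin (n+1), |lam k| with hA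
      have hA0 : 0 ≤ A := Finset.sum_nonneg (fun k _ => abs_nonneg _)
      set K2 : ℝ := A * (K * Real.exp (L * n)) with hK2
      have hdbound : ∀ m : ℤ, |d m| ≤ K2 * Real.exp (L * |(m:ℝ)|) := by
        intro m
        rw [hd]
        refine (Finset.abs_sum_le_sum_abs _ _).trans ?_
        have h1 : ∀ k : Fin (n+1), |lam k * c (m + ((k:ℕ):ℤ))|
            ≤ |lam k| * (K * Real.exp (L * n) * Real.exp (L * |(m:ℝ)|)) := by
          intro k
          rw [abs_mul]
          refine mul_le_mul_of_nonneg_left ?_ (abs_nonneg _)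
          have habs2 : |((m + ((k:ℕ):ℤ) : ℤ):ℝ)| ≤ |(m:ℝ)| + (n:ℝ) := by
            push_cast
            refine (abs_add_le _ _).trans ?_
            have h2 : |((k:ℕ):ℝ)| = ((k:ℕ):ℝ) := abs_of_nonneg (by positivity)
            have h3 : ((k:ℕ):ℝ) ≤ (n:ℝ) := by
              have := k.isLt
              exact_mod_cast by omega
            linarith
          calc |c (m + ((k:ℕ):ℤ))| ≤ K * Real.exp (L * |((m + ((k:ℕ):ℤ) : ℤ):ℝ)|) := hK _
            _ ≤ K * Real.exp (L * (|(m:ℝ)| + n)) := by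
                refine mul_le_mul_of_nonneg_left ?_ hK0
                apply Real.exp_le_exp.2
                nlinarith
            _ = K * Real.exp (L * n) * Real.exp (L * |(m:ℝ)|) := by
                rw [mul_assoc, ← Real.exp_add]
                ring_nf
        refine (Finset.sum_le_sum (fun k _ => h1 k)).trans ?_
        rw [← Finset.sum_mul, ← hA, hK2]
        ring_nf
        exact le_refl _
      have hdsum : ∀ t : ℝ, Summable (fun m : ℤ => gfun d X m t) :=
        fun t => summable_gfun hX hLX hdbound t
      have hGeq : ∀ t : ℝ, ∑' m : ℤ, gfun d X m t = -μ - ∑' m : ℤ, hfin m := by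
        intro t
        have h1 := hptU t
        rw [shift_eq hX hLX hK lam t] at h1
        rw [tsum_congr (fun m => hdecomp m t)] at h1
        rw [Summable.tsum_add (hdsum t) hfinsum] at h1
        linarith
      have hGconst : ∀ t1 t2 : ℝ, ∑' m : ℤ, gfun d X m t1 = ∑' m : ℤ, gfun d X m t2 :=
        fun t1 t2 => by rw [hGeq t1, hGeq t2]
      have hdzero : ∀ m, d m = 0 := vanish hL hXdef hdbound hGconst
      have hlamzero : ∀ k, lam k = 0 := by
        refine annihilator hn hα lam ?_ j0 (hlam0 j0 hj0not)
        intro m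
        have h1 := hdzero m
        rw [hd] at h1
        rw [hc] at h1
        exact h1
      refine ⟨?_, hlamzero⟩
      have h1 := hpt 0
      have h2 : ∑ s ∈ I', lam s * (fun t : ℝ => (σ ↑t).re) ((fun _ : Fin (n+1) => (1:ℝ)) s * 0 + ((s:ℕ):ℝ)) = 0 := by
        apply Finset.sum_eq_zero
        intro s _
        rw [hlamzero s, zero_mul]
      rw [h2] at h1
      linarith


end NNPaper
end
end

section
/- Let ρ: ℝ → ℝ be a nonlinearity, let J be a finite index set, and let {(α_s, β_s, γ_s)}_{s∈J} be triples of real numbers such that Σ_{s∈J} α_s ρ(β_s·+γ_s) is a constant function. If j* ∈ J is such that α_{j*} ≠ 0, then there exist a subset I ⊆ J with j* ∈ I and real numbers {α̃_s}_{s∈I} with α̃_{j*} ≠ 0 such that (ζ, {(α̃_s, β_s, γ_s)}_{s∈I}) is an affine symmetry of ρ for some ζ ∈ ℝ. -/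
open scoped Classical
noncomputable section

namespace NNPaper

/-- If a finite combination `∑_{s ∈ J} α s • ρ (β s • ⬝ + γ s)` is constant and
`α j ≠ 0` for some `j ∈ J`, then there is a subset `I ⊆ J` containing `j` and
coefficients `α̃` with `α̃ j ≠ 0` such that `(ζ, {(α̃ s, β s, γ s)}_{s ∈ I})` is an
affine symmetry of `ρ` for some `ζ`. -/
theorem affine_symmetry_of_constant_combination {ι : Type} (ρ : ℝ → ℝ)
    (hρ : Nonlinearity ρ) (J : Finset ι) (α β γ : ι → ℝ)
    (hconst : ∃ c : ℝ, ∀ t : ℝ, ∑ s ∈ J, α s * ρ (β s * t + γ s) = c)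
    (j : ι) (hj : j ∈ J) (hα : α j ≠ 0) :
    ∃ I : Finset ι, I ⊆ J ∧ j ∈ I ∧
      ∃ (αt : ι → ℝ) (ζ : ℝ), αt j ≠ 0 ∧ IsAffineSymmetry ρ I ζ αt β γ := by
  classical
  set f : ι → ℝ → ℝ := fun s => fun t : ℝ => ρ (β s * t + γ s) with hf
  set P : Finset ι → Prop := fun I => I ⊆ J ∧ j ∈ I ∧
    ∃ (αt : ι → ℝ) (ζ : ℝ), αt j ≠ 0 ∧ ∀ t : ℝ, ∑ s ∈ I, αt s * f s t = ζ with hP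
  have hPJ : P J := by
    obtain ⟨c, hc⟩ := hconst
    exact ⟨le_refl J, hj, α, c, hα, hc⟩
  set S : Finset (Finset ι) := J.powerset.filter P with hSdef
  have hJS : J ∈ S := Finset.mem_filter.mpr ⟨Finset.mem_powerset.mpr le_rfl, hPJ⟩
  obtain ⟨I, hIS, hmin⟩ := S.exists_min_image Finset.card ⟨J, hJS⟩
  obtain ⟨hIJ, hjI, αt, ζ, hαtj, hsum⟩ := (Finset.mem_filter.mp hIS).2
  refine ⟨I, hIJ, hjI, αt, ζ, hαtj, ⟨j, hjI⟩, hsum, ?_⟩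
  intro I' hI'
  have hI'I : I' ⊆ I := hI'.subset
  -- the family indexed by `Option {x // x ∈ I'}`
  set v : Option {x // x ∈ I'} → (ℝ → ℝ) :=
    fun o => Option.elim o (fun _ : ℝ => (1 : ℝ)) (fun s => f s) with hv
  have hindep : LinearIndependent ℝ v := by
    rw [Fintype.linearIndependent_iff]
    intro c hc
    set d : ι → ℝ := fun s => if h : s ∈ I' then c (some ⟨s, h⟩) else 0 with hd
    have hct : ∀ t : ℝ, c none + ∑ s ∈ I', d s * f s t = 0 := by
      intro t
      have h2 : ∑ i : Option {x // x ∈ I'}, (c i • v i) t = 0 := by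
        have h1 := congrFun hc t
        simpa [Finset.sum_apply] using h1
      rw [Fintype.sum_option] at h2
      have h3 : ∑ s ∈ I', d s * f s t
          = ∑ a : {x // x ∈ I'}, (c (some a) • v (some a)) t := by
        rw [← Finset.sum_attach I' (fun s => d s * f s t)]
        refine Finset.sum_congr rfl ?_
        intro a _
        simp [hd, hv, a.2]
      rw [h3]
      simpa [hv] using h2
    have hzero : ∀ s ∈ I', d s = 0 := by
      by_contra hcon
      push_neg at hcon
      obtain ⟨s₀, hs₀I', hds₀⟩ := hcon
      by_cases hdj : d j = 0
      · -- remove s₀ from I, keep j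
        have hs₀j : s₀ ≠ j := fun h => hds₀ (h ▸ hdj)
        have hs₀I : s₀ ∈ I := hI'I hs₀I'
        set lam : ℝ := αt s₀ / d s₀ with hlam
        set αt' : ι → ℝ := fun s => αt s - lam * d s with hαt'
        have hαt'j : αt' j ≠ 0 := by simpa [hαt', hdj] using hαtj
        have hαt's₀ : αt' s₀ = 0 := by
          simp [hαt', hlam, div_mul_cancel₀ _ hds₀]
        have hdsumI : ∀ t : ℝ, ∑ s ∈ I, d s * f s t = -(c none) := by
          intro t
          rw [← Finset.sum_subset hI'I (fun s _ hs => by simp [hd, hs])]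
          linarith [hct t]
        have hsum' : ∀ t : ℝ, ∑ s ∈ I.erase s₀, αt' s * f s t = ζ + lam * c none := by
          intro t
          have h4 : ∑ s ∈ I, αt' s * f s t = ζ + lam * c none := by
            have : ∑ s ∈ I, αt' s * f s t
                = ∑ s ∈ I, αt s * f s t - lam * ∑ s ∈ I, d s * f s t := by
              rw [Finset.mul_sum, ← Finset.sum_sub_distrib]
              refine Finset.sum_congr rfl fun s _ => by simp only [hαt']; ring
            rw [this, hsum t, hdsumI t]; ring
          rw [← h4]
          rw [← Finset.add_sum_erase I _ hs₀I, hαt's₀, zero_mul, zero_add]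
        have hPI : P (I.erase s₀) :=
          ⟨(Finset.erase_subset _ _).trans hIJ,
            Finset.mem_erase.mpr ⟨fun h => hs₀j h.symm, hjI⟩,
            αt', ζ + lam * c none, hαt'j, hsum'⟩
        have hmem : I.erase s₀ ∈ S :=
          Finset.mem_filter.mpr ⟨Finset.mem_powerset.mpr hPI.1, hPI⟩
        have := hmin _ hmem
        have hlt := Finset.card_erase_lt_of_mem hs₀I
        omega
      · -- use I' itself
        have hjI' : j ∈ I' := by
          by_contra h
          exact hdj (by simp [hd, h])
        have hsum' : ∀ t : ℝ, ∑ s ∈ I', d s * f s t = -(c none) := by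
          intro t; linarith [hct t]
        have hPI : P I' := ⟨hI'I.trans hIJ, hjI', d, -(c none), hdj, hsum'⟩
        have hmem : I' ∈ S := Finset.mem_filter.mpr ⟨Finset.mem_powerset.mpr hPI.1, hPI⟩
        have := hmin _ hmem
        have hlt := Finset.card_lt_card hI'
        omega
    have hnone : c none = 0 := by
      have h5 := hct 0
      rw [Finset.sum_eq_zero (fun s hs => by rw [hzero s hs, zero_mul])] at h5
      linarith
    intro i
    match i with
    | none => exact hnone
    | some a =>
      have h6 := hzero a.1 a.2
      simpa [hd, a.2] using h6
  have hrange : Set.range v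
      = insert (fun _ : ℝ => (1 : ℝ)) (f '' (I' : Set ι)) := by
    ext g
    constructor
    · rintro ⟨o, rfl⟩
      cases o with
      | none => exact Set.mem_insert _ _
      | some a => exact Set.mem_insert_of_mem _ ⟨a.1, a.2, rfl⟩
    · intro hg
      rcases hg with rfl | ⟨s, hs, rfl⟩
      · exact ⟨none, rfl⟩
      · exact ⟨some ⟨s, hs⟩, rfl⟩
  have := hindep.linearIndepOn_id
  rw [hrange] at this
  exact this

end NNPaper
end
end

section
/- Let Π = aℤ × ibℤ be a lattice in ℂ with a, b > 0, let β ∈ ℂ\{0} and γ ∈ ℂ, and set P = β⁻¹(Π − γ). Suppose ℓ is a line in ℂ such that the asymptotic density Δ(ℓ, P) is strictly positive. Then ℓ ∩ P is an arithmetic sequence, and there exists ε₀ > 0 such that every point of P whose distance to ℓ is at most ε₀ lies on ℓ, i.e., (ℓ + D(0, ε₀)) ∩ P = ℓ ∩ P. -/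
open scoped Classical
noncomputable section
namespace NNPaper

/-- A line in `ℂ`. -/
def IsLine (L : Set ℂ) : Prop :=
  ∃ x y : ℂ, y ≠ 0 ∧ L = {z : ℂ | ∃ t : ℝ, z = x + (t : ℂ) * y}

/-- An arithmetic sequence in `ℂ`. -/
def IsArithSeq (S : Set ℂ) : Prop :=
  ∃ x y : ℂ, y ≠ 0 ∧ S = {z : ℂ | ∃ k : ℤ, z = x + (k : ℂ) * y}

/-- `Δ_ε(F, P)`: the `ε`-thickened counting density of `P` along `F`. -/
noncomputable def densEps (F P : Set ℂ) (ε : ℝ) : ℝ :=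
  Filter.limsup (fun N : ℝ =>
    (({p : ℂ | p ∈ P ∧ ‖p‖ ≤ N ∧ ∃ q ∈ F, ‖p - q‖ ≤ ε}.ncard : ℝ)) / (2 * N))
    Filter.atTop

/-- The asymptotic density `Δ(F, P)` of `P` along `F`. -/
noncomputable def dens (F P : Set ℂ) : ℝ :=
  sInf {d : ℝ | ∃ ε : ℝ, 0 < ε ∧ d = densEps F P ε}

/-- The lattice `aℤ × i bℤ ⊆ ℂ`. -/
def latticeZ (a b : ℝ) : Set ℂ :=
  {z : ℂ | ∃ m n : ℤ, z = (a : ℂ) * (m : ℂ) + Complex.I * ((b : ℂ) * (n : ℂ))}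

end NNPaper
namespace NNPaper

lemma dens_pos_contra {F P : Set ℂ} (hd : 0 < dens F P) {ε r : ℝ} (hε : 0 < ε)
    (hr : densEps F P ε ≤ r) (hrd : r < dens F P) : False := by
  by_cases hb : BddBelow {d : ℝ | ∃ ε : ℝ, 0 < ε ∧ d = densEps F P ε}
  · have h1 : dens F P ≤ densEps F P ε := csInf_le hb ⟨ε, hε, rfl⟩
    linarith
  · rw [dens, Real.sInf_of_not_bddBelow hb] at hd
    exact lt_irrefl _ hd

lemma sep_count {S : Set ℝ} {s G : ℝ} (hs : 0 < s) (hG : 0 ≤ G)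
    (hbdd : ∀ u ∈ S, |u| ≤ G) (hsep : ∀ u ∈ S, ∀ v ∈ S, u ≠ v → s ≤ |u - v|) :
    (S.ncard : ℝ) ≤ 2 * G / s + 1 := by
  have hGs : 0 ≤ 2 * G / s := by positivity
  by_cases hfin : S.Finite
  · set φ : ℝ → ℤ := fun u => ⌊(u + G) / s⌋ with hφ
    have hinj : Set.InjOn φ S := by
      intro u hu v hv huv
      by_contra hne
      have h1 : s ≤ |u - v| := hsep u hu v hv hne
      have h2 : |(u + G) / s - (v + G) / s| < 1 := Int.abs_sub_lt_one_of_floor_eq_floor huv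
      rw [div_sub_div_same, abs_div, abs_of_pos hs] at h2
      have : |u + G - (v + G)| < s := by
        rw [div_lt_one hs] at h2; exact h2
      simp only [add_sub_add_right_eq_sub] at this
      linarith
    have hsub : φ '' S ⊆ Set.Icc (0 : ℤ) ⌊2 * G / s⌋ := by
      rintro _ ⟨u, hu, rfl⟩
      constructor
      · exact Int.floor_nonneg.mpr (div_nonneg (by have := (abs_le.mp (hbdd u hu)).1; linarith) hs.le)
      · apply Int.floor_le_floor
        apply div_le_div_of_nonneg_right ?_ hs.le
        have := (abs_le.mp (hbdd u hu)).2
        linarith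
    have h1 : S.ncard = (φ '' S).ncard := (Set.ncard_image_of_injOn hinj).symm
    have h2 : (φ '' S).ncard ≤ (Set.Icc (0 : ℤ) ⌊2 * G / s⌋).ncard :=
      Set.ncard_le_ncard hsub (Set.finite_Icc _ _)
    have h3 : (Set.Icc (0 : ℤ) ⌊2 * G / s⌋).ncard = (⌊2 * G / s⌋ + 1).toNat := by
      rw [← Finset.coe_Icc, Set.ncard_coe_finset, Int.card_Icc]
      simp
    have h4 : ((⌊2 * G / s⌋ + 1).toNat : ℝ) ≤ 2 * G / s + 1 := by
      have hfl : (0:ℤ) ≤ ⌊2 * G / s⌋ := Int.floor_nonneg.mpr hGs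
      have h5 : ((⌊2 * G / s⌋ + 1).toNat : ℤ) = ⌊2 * G / s⌋ + 1 := Int.toNat_of_nonneg (by linarith)
      have h6 : ((⌊2 * G / s⌋ + 1).toNat : ℝ) = (⌊2 * G / s⌋ : ℝ) + 1 := by
        exact_mod_cast congrArg (fun z : ℤ => (z : ℝ)) h5
      rw [h6]
      have := Int.floor_le (2 * G / s)
      linarith
    calc (S.ncard : ℝ) = ((φ '' S).ncard : ℝ) := by rw [h1]
      _ ≤ ((⌊2 * G / s⌋ + 1).toNat : ℝ) := by rw [← h3]; exact_mod_cast h2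
      _ ≤ 2 * G / s + 1 := h4
  · rw [Set.Infinite.ncard hfin]
    simpa using by linarith


set_option maxHeartbeats 1600000 in
/-- **Positive density along a line forces alignment with the lattice.** If
`P = β⁻¹ (Π − γ)` for the lattice `Π = aℤ × i bℤ` and `L` is a line with
`Δ(L, P) > 0`, then `L ∩ P` is an arithmetic sequence and every point of `P` at
distance at most `ε₀` from `L` lies on `L`, for some `ε₀ > 0`. -/
theorem line_density_lattice (a b : ℝ) (ha : 0 < a) (hb : 0 < b)
    (β γ : ℂ) (hβ : β ≠ 0) (P : Set ℂ)
    (hP : P = {z : ℂ | ∃ w ∈ latticeZ a b, z = β⁻¹ * (w - γ)})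
    (L : Set ℂ) (hL : IsLine L) (hd : 0 < dens L P) :
    IsArithSeq (L ∩ P) ∧
      ∃ ε₀ : ℝ, 0 < ε₀ ∧ ∀ p ∈ P, (∃ q ∈ L, ‖p - q‖ ≤ ε₀) → p ∈ L := by
  obtain ⟨x, y, hy, hLdef⟩ := hL
  have hcy : (0:ℝ) < ‖y‖ := norm_pos_iff.mpr hy
  set f : ℂ → ℝ := fun z => (z * (starRingEnd ℂ) y).im with hfdef
  set g : ℂ → ℝ := fun z => (z * (starRingEnd ℂ) y).re with hgdef
  have hf_add : ∀ z w, f (z + w) = f z + f w := by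
    intro z w; simp [hfdef, add_mul]; ring
  have hf_sub : ∀ z w, f (z - w) = f z - f w := by
    intro z w; simp [hfdef, sub_mul]; ring
  have hg_sub : ∀ z w, g (z - w) = g z - g w := by
    intro z w; simp [hgdef, sub_mul]; ring
  have hf_bound : ∀ z, |f z| ≤ ‖z‖ * ‖y‖ := by
    intro z
    calc |f z| ≤ ‖z * (starRingEnd ℂ) y‖ := Complex.abs_im_le_norm _
      _ = ‖z‖ * ‖y‖ := by
          rw [norm_mul, Complex.norm_conj]
  have hg_bound : ∀ z, |g z| ≤ ‖z‖ * ‖y‖ := by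
    intro z
    calc |g z| ≤ ‖z * (starRingEnd ℂ) y‖ := Complex.abs_re_le_norm _
      _ = ‖z‖ * ‖y‖ := by
          rw [norm_mul, Complex.norm_conj]
  have hnormsq : ∀ z, g z ^ 2 + f z ^ 2 = ‖z‖^2 * ‖y‖^2 := by
    intro z
    have h1 : g z ^ 2 + f z ^ 2 = Complex.normSq (z * (starRingEnd ℂ) y) := by
      rw [Complex.normSq_apply]; ring
    rw [h1, map_mul, Complex.normSq_conj, Complex.normSq_eq_norm_sq, Complex.normSq_eq_norm_sq]
  have hnsy : (Complex.normSq y : ℝ) ≠ 0 := by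
    simpa [Complex.normSq_eq_zero] using hy
  have hker : ∀ z, f z = 0 ↔ ∃ t : ℝ, z = (t:ℝ) * y := by
    intro z; constructor
    · intro h0
      refine ⟨g z / Complex.normSq y, ?_⟩
      have h1 : z * (starRingEnd ℂ) y = ((g z : ℝ) : ℂ) := by
        apply Complex.ext
        · simp [hgdef]
        · simpa [hfdef] using h0
      have h2 : z * ((starRingEnd ℂ) y * y) = ((g z : ℝ) : ℂ) * y := by
        rw [← mul_assoc, h1]
      have h3 : (starRingEnd ℂ) y * y = ((Complex.normSq y : ℝ) : ℂ) := by
        rw [mul_comm, Complex.mul_conj]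
      rw [h3] at h2
      have hns' : ((Complex.normSq y : ℝ) : ℂ) ≠ 0 := by exact_mod_cast hnsy
      push_cast
      rw [div_mul_eq_mul_div, eq_div_iff hns']
      linear_combination h2
    · rintro ⟨t, rfl⟩
      simp [hfdef, mul_assoc, Complex.mul_conj]; ring
  have hmemL : ∀ p, p ∈ L ↔ f (p - x) = 0 := by
    intro p
    rw [hLdef]
    simp only [Set.mem_setOf_eq]
    rw [hker (p - x)]
    constructor
    · rintro ⟨t, ht⟩; exact ⟨t, by rw [ht]; ring⟩
    · rintro ⟨t, ht⟩; exact ⟨t, by linear_combination ht⟩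
  -- lattice setup
  set e₁ : ℂ := β⁻¹ * a with he₁
  set e₂ : ℂ := β⁻¹ * (Complex.I * b) with he₂
  set z₀ : ℂ := -(β⁻¹ * γ) with hz₀
  have hβinv : β⁻¹ ≠ 0 := inv_ne_zero hβ
  have hPmem : ∀ p, p ∈ P ↔ ∃ m n : ℤ, p = z₀ + (m:ℂ) * e₁ + (n:ℂ) * e₂ := by
    intro p
    rw [hP]
    simp only [Set.mem_setOf_eq, latticeZ]
    constructor
    · rintro ⟨w, ⟨m, n, rfl⟩, rfl⟩
      exact ⟨m, n, by rw [he₁, he₂, hz₀]; ring⟩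
    · rintro ⟨m, n, rfl⟩
      exact ⟨(a:ℂ) * m + Complex.I * ((b:ℂ) * n), ⟨m, n, rfl⟩, by rw [he₁, he₂, hz₀]; ring⟩
  have hz₀P : z₀ ∈ P := (hPmem z₀).mpr ⟨0, 0, by simp⟩
  have hco : ∀ m n : ℤ, β * ((m:ℂ) * e₁ + (n:ℂ) * e₂) = ((a * m : ℝ) : ℂ) + ((b * n : ℝ) : ℂ) * Complex.I := by
    intro m n
    rw [he₁, he₂]
    push_cast
    field_simp
  have hlat_ne : ∀ m n : ℤ, ¬(m = 0 ∧ n = 0) → (m:ℂ) * e₁ + (n:ℂ) * e₂ ≠ 0 := by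
    intro m n hmn h0
    have h1 : ((a * m : ℝ) : ℂ) + ((b * n : ℝ) : ℂ) * Complex.I = 0 := by
      rw [← hco m n, h0, mul_zero]
    have hre : a * (m:ℝ) = 0 := by
      have := congrArg Complex.re h1
      simpa using this
    have him : b * (n:ℝ) = 0 := by
      have := congrArg Complex.im h1
      simpa using this
    apply hmn
    constructor
    · exact_mod_cast (mul_eq_zero.mp hre).resolve_left (ne_of_gt ha)
    · exact_mod_cast (mul_eq_zero.mp him).resolve_left (ne_of_gt hb)
  have hdiffP : ∀ p ∈ P, ∀ q ∈ P, ∃ m n : ℤ, p - q = (m:ℂ) * e₁ + (n:ℂ) * e₂ := by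
    intro p hp q hq
    obtain ⟨m1, n1, rfl⟩ := (hPmem p).mp hp
    obtain ⟨m2, n2, rfl⟩ := (hPmem q).mp hq
    exact ⟨m1 - m2, n1 - n2, by push_cast; ring⟩
  set u : ℝ := f e₁ with hu
  set v : ℝ := f e₂ with hv
  have hf_int : ∀ (k : ℤ) (z : ℂ), f ((k:ℂ) * z) = k * f z := by
    intro k z
    simp only [hfdef]
    simp [Complex.mul_re, Complex.mul_im]
    ring
  have hflat : ∀ m n : ℤ, f ((m:ℂ) * e₁ + (n:ℂ) * e₂) = m * u + n * v := by
    intro m n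
    rw [hf_add, hf_int, hf_int]
  have huv : ¬(u = 0 ∧ v = 0) := by
    rintro ⟨hu0, hv0⟩
    set w : ℂ := β⁻¹ * (starRingEnd ℂ) y with hw
    have hwne : w ≠ 0 := mul_ne_zero hβinv (by simpa using hy)
    have hue : u = a * w.im := by
      have h1 : e₁ * (starRingEnd ℂ) y = (a:ℂ) * w := by rw [he₁, hw]; ring
      have h2 : u = (e₁ * (starRingEnd ℂ) y).im := rfl
      rw [h2, h1]
      simp [Complex.mul_im]
    have hve : v = b * w.re := by
      have h1 : e₂ * (starRingEnd ℂ) y = (b:ℂ) * (Complex.I * w) := by rw [he₂, hw]; ring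
      have h2 : v = (e₂ * (starRingEnd ℂ) y).im := rfl
      rw [h2, h1]
      simp [Complex.mul_im, Complex.mul_re]
    apply hwne
    apply Complex.ext
    · have : b * w.re = 0 := by rw [← hve]; exact hv0
      simpa using (mul_eq_zero.mp this).resolve_left (ne_of_gt hb)
    · have : a * w.im = 0 := by rw [← hue]; exact hu0
      simpa using (mul_eq_zero.mp this).resolve_left (ne_of_gt ha)
  have hstrip : ∀ ε : ℝ, ∀ p, (∃ q ∈ L, ‖p - q‖ ≤ ε) → |f (p - x)| ≤ ε * ‖y‖ := by
    rintro ε p ⟨q, hqL, hpq⟩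
    have hq0 : f (q - x) = 0 := (hmemL q).mp hqL
    have harg : p - x = (p - q) + (q - x) := by ring
    rw [harg, hf_add, hq0, add_zero]
    calc |f (p - q)| ≤ ‖p - q‖ * ‖y‖ := hf_bound _
      _ ≤ ε * ‖y‖ := mul_le_mul_of_nonneg_right hpq hcy.le
  by_cases hrat : ∃ m n : ℤ, ¬(m = 0 ∧ n = 0) ∧ (m:ℝ) * u + (n:ℝ) * v = 0
  · obtain ⟨m₀, n₀, hmn₀, hrel₀⟩ := hrat
    have hgcd0 : Int.gcd m₀ n₀ ≠ 0 := by
      simp only [ne_eq, Int.gcd_eq_zero_iff]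
      exact hmn₀
    have hdpos : 0 < Int.gcd m₀ n₀ := Nat.pos_of_ne_zero hgcd0
    set dz : ℤ := (Int.gcd m₀ n₀ : ℤ) with hdz
    have hdzne : (dz:ℝ) ≠ 0 := by
      simp only [hdz]
      exact_mod_cast Nat.cast_ne_zero.mpr hgcd0
    set m₁ : ℤ := m₀ / dz with hm₁
    set n₁ : ℤ := n₀ / dz with hn₁
    have hm₀eq : m₁ * dz = m₀ := Int.ediv_mul_cancel (Int.gcd_dvd_left m₀ n₀)
    have hn₀eq : n₁ * dz = n₀ := Int.ediv_mul_cancel (Int.gcd_dvd_right m₀ n₀)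
    have hcop : Int.gcd m₁ n₁ = 1 := Int.gcd_div_gcd_div_gcd hdpos
    have h₁₁ : ¬(m₁ = 0 ∧ n₁ = 0) := by
      rintro ⟨h1, h2⟩
      rw [h1, h2] at hcop
      simp at hcop
    have hrel₁ : (m₁:ℝ) * u + (n₁:ℝ) * v = 0 := by
      have hmr : (m₁:ℝ) * (dz:ℝ) = (m₀:ℝ) := by exact_mod_cast congrArg (fun z : ℤ => (z:ℝ)) hm₀eq
      have hnr : (n₁:ℝ) * (dz:ℝ) = (n₀:ℝ) := by exact_mod_cast congrArg (fun z : ℤ => (z:ℝ)) hn₀eq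
      have h0 : (dz:ℝ) * ((m₁:ℝ) * u + (n₁:ℝ) * v) = 0 := by
        linear_combination u * hmr + v * hnr + hrel₀
      exact (mul_eq_zero.mp h0).resolve_left hdzne
    have hcop' : IsCoprime m₁ n₁ := Int.isCoprime_iff_gcd_eq_one.mpr hcop
    obtain ⟨s, t, hbez⟩ := hcop'
    have hbezr : (s:ℝ) * m₁ + (t:ℝ) * n₁ = 1 := by exact_mod_cast congrArg (fun z : ℤ => (z:ℝ)) hbez
    set c₀ : ℝ := s * v - t * u with hc₀def
    have hkey : ∀ m n : ℤ, (m:ℝ) * u + (n:ℝ) * v = ((m₁ * n - n₁ * m : ℤ) : ℝ) * c₀ := by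
      intro m n
      push_cast
      linear_combination ((s:ℝ) * m + (t:ℝ) * n) * hrel₁ - ((m:ℝ) * u + (n:ℝ) * v) * hbezr
    have hc₀ : c₀ ≠ 0 := by
      intro h0
      apply huv
      constructor
      · have h1 := hkey 1 0
        rw [h0, mul_zero] at h1
        simpa using h1
      · have h1 := hkey 0 1
        rw [h0, mul_zero] at h1
        simpa using h1
    set θ : ℝ := f (z₀ - x) with hθ
    have hpf : ∀ p ∈ P, ∃ k : ℤ, f (p - x) = θ + (k:ℝ) * c₀ := by
      intro p hp
      obtain ⟨m, n, hmn⟩ := hdiffP p hp z₀ hz₀P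
      refine ⟨m₁ * n - n₁ * m, ?_⟩
      have harg : p - x = (p - z₀) + (z₀ - x) := by ring
      rw [harg, hf_add, hmn, hflat m n, hkey m n]
      ring
    by_cases honL : ∃ p ∈ P, f (p - x) = 0
    · -- main conclusion
      obtain ⟨p₁, hp₁P, hp₁f⟩ := honL
      have hdet : ∀ m n : ℤ, (m:ℝ) * u + (n:ℝ) * v = 0 → ∃ k : ℤ, m = k * m₁ ∧ n = k * n₁ := by
        intro m n h0
        have hk := hkey m n
        rw [h0] at hk
        have h1 : ((m₁ * n - n₁ * m : ℤ) : ℝ) = 0 := by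
          rcases mul_eq_zero.mp hk.symm with h | h
          · exact h
          · exact absurd h hc₀
        have hdet0 : m₁ * n - n₁ * m = 0 := by exact_mod_cast h1
        refine ⟨s * m + t * n, ?_, ?_⟩
        · linear_combination (-m) * hbez + (-t) * hdet0
        · linear_combination (-n) * hbez + s * hdet0
      constructor
      · -- IsArithSeq
        set lam : ℂ := (m₁:ℂ) * e₁ + (n₁:ℂ) * e₂ with hlam
        refine ⟨p₁, lam, hlat_ne m₁ n₁ h₁₁, ?_⟩
        ext z
        simp only [Set.mem_inter_iff, Set.mem_setOf_eq]
        constructor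
        · rintro ⟨hzL, hzP⟩
          obtain ⟨m, n, hmn⟩ := hdiffP z hzP p₁ hp₁P
          have h0 : (m:ℝ) * u + (n:ℝ) * v = 0 := by
            rw [← hflat m n, ← hmn]
            have harg : z - p₁ = (z - x) - (p₁ - x) := by ring
            rw [harg, hf_sub, (hmemL z).mp hzL, hp₁f, sub_zero]
          obtain ⟨k, hkm, hkn⟩ := hdet m n h0
          refine ⟨k, ?_⟩
          have hz' : z = p₁ + (m:ℂ) * e₁ + (n:ℂ) * e₂ := by linear_combination hmn
          rw [hz', hkm, hkn, hlam]
          push_cast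
          ring
        · rintro ⟨k, rfl⟩
          constructor
          · rw [hmemL]
            have harg : f (p₁ + (k:ℂ) * lam - x) = f (p₁ - x) + f (((k * m₁ : ℤ):ℂ) * e₁ + ((k * n₁ : ℤ):ℂ) * e₂) := by
              rw [← hf_add]
              congr 1
              rw [hlam]
              push_cast
              ring
            rw [harg, hp₁f, hflat, zero_add]
            push_cast
            linear_combination (k:ℝ) * hrel₁
          · apply (hPmem _).mpr
            obtain ⟨mp, np, hp₁⟩ := (hPmem p₁).mp hp₁P
            refine ⟨mp + k * m₁, np + k * n₁, ?_⟩
            rw [hp₁, hlam]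
            push_cast
            ring
      · -- gap
        refine ⟨|c₀| / (2 * ‖y‖), by positivity, ?_⟩
        intro p hpP hnear
        have h1 : |f (p - x)| ≤ (|c₀| / (2 * ‖y‖)) * ‖y‖ := hstrip _ p hnear
        have h2 : (|c₀| / (2 * ‖y‖)) * ‖y‖ = |c₀| / 2 := by
          rw [div_mul_eq_mul_div, div_eq_div_iff (by positivity) (by norm_num : (2:ℝ) ≠ 0)]
          ring
        rw [h2] at h1
        obtain ⟨m, n, hmn⟩ := hdiffP p hpP p₁ hp₁P
        have h3 : f (p - x) = ((m₁ * n - n₁ * m : ℤ) : ℝ) * c₀ := by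
          have harg : p - x = (p - p₁) + (p₁ - x) := by ring
          rw [harg, hf_add, hp₁f, add_zero, hmn, hflat m n, hkey m n]
        rw [h3] at h1
        rw [abs_mul] at h1
        have hk0 : ((m₁ * n - n₁ * m : ℤ) : ℝ) = 0 := by
          by_contra hk
          have hkne : m₁ * n - n₁ * m ≠ 0 := by exact_mod_cast hk
          have h4 : (1:ℝ) ≤ |((m₁ * n - n₁ * m : ℤ) : ℝ)| := by
            have := Int.one_le_abs hkne
            exact_mod_cast this
          have h5 : 0 < |c₀| := abs_pos.mpr hc₀
          nlinarith
        rw [hmemL, h3, hk0, zero_mul]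
    · -- R1 : contradiction
      exfalso
      push_neg at honL
      set k₀ : ℤ := round (θ / c₀) with hk₀
      set v₀ : ℝ := θ - k₀ * c₀ with hv₀def
      have hv₀ : |v₀| ≤ |c₀| / 2 := by
        have h1 : |θ / c₀ - k₀| ≤ 1 / 2 := abs_sub_round (θ / c₀)
        have h2 : v₀ = c₀ * (θ / c₀ - k₀) := by
          rw [hv₀def]
          field_simp
        rw [h2, abs_mul]
        nlinarith [abs_nonneg c₀]
      obtain ⟨d₀, hd₀pos, hd₀⟩ : ∃ d₀, 0 < d₀ ∧ ∀ k : ℤ, θ + (k:ℝ) * c₀ ≠ 0 → d₀ ≤ |θ + (k:ℝ) * c₀| := by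
        by_cases hv0 : v₀ = 0
        · refine ⟨|c₀| / 2, by positivity, ?_⟩
          intro k hne
          have hθeq : θ = (k₀:ℝ) * c₀ := by
            have h := hv₀def
            rw [hv0] at h
            linarith
          have h5 : θ + (k:ℝ) * c₀ = ((k₀ + k : ℤ):ℝ) * c₀ := by
            rw [hθeq]; push_cast; ring
          rw [h5] at hne ⊢
          have hkne : (k₀ + k) ≠ 0 := by
            rintro h
            rw [h] at hne
            simp at hne
          have h6 : (1:ℝ) ≤ |((k₀ + k : ℤ):ℝ)| := by exact_mod_cast Int.one_le_abs hkne
          rw [abs_mul]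
          have h7 : 0 < |c₀| := abs_pos.mpr hc₀
          nlinarith
        · refine ⟨min |v₀| (|c₀| / 2), lt_min (abs_pos.mpr hv0) (by positivity), ?_⟩
          intro k hne
          have h5 : θ + (k:ℝ) * c₀ = v₀ + ((k + k₀ : ℤ):ℝ) * c₀ := by
            rw [hv₀def]; push_cast; ring
          by_cases hk : k + k₀ = 0
          · rw [h5, hk]
            simp only [Int.cast_zero, zero_mul, add_zero]
            exact min_le_left _ _
          · have h6 : (1:ℝ) ≤ |((k + k₀ : ℤ):ℝ)| := by exact_mod_cast Int.one_le_abs hk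
            have h7 : |((k + k₀ : ℤ):ℝ) * c₀| - |v₀| ≤ |v₀ + ((k + k₀ : ℤ):ℝ) * c₀| := by
              have := abs_sub_abs_le_abs_sub (((k + k₀ : ℤ):ℝ) * c₀) (-v₀)
              simp only [abs_neg, sub_neg_eq_add] at this
              calc |((k + k₀ : ℤ):ℝ) * c₀| - |v₀| ≤ |((k + k₀ : ℤ):ℝ) * c₀ + v₀| := this
                _ = |v₀ + ((k + k₀ : ℤ):ℝ) * c₀| := by rw [add_comm]
            rw [h5]
            have h8 : 0 < |c₀| := abs_pos.mpr hc₀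
            rw [abs_mul] at h7
            have h9 : min |v₀| (|c₀| / 2) ≤ |c₀| / 2 := min_le_right _ _
            nlinarith
      set εr : ℝ := d₀ / (2 * ‖y‖) with hεrdef
      have hεr : 0 < εr := by positivity
      have hempty : ∀ N : ℝ, {p : ℂ | p ∈ P ∧ ‖p‖ ≤ N ∧ ∃ q ∈ L, ‖p - q‖ ≤ εr} = ∅ := by
        intro N
        ext p
        simp only [Set.mem_setOf_eq, Set.mem_empty_iff_false, iff_false, not_and]
        intro hpP _ hnear
        have h1 : |f (p - x)| ≤ εr * ‖y‖ := hstrip _ p hnear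
        have h2 : εr * ‖y‖ = d₀ / 2 := by
          rw [hεrdef, div_mul_eq_mul_div, div_eq_div_iff (by positivity) (by norm_num : (2:ℝ) ≠ 0)]
          ring
        rw [h2] at h1
        obtain ⟨k, hk⟩ := hpf p hpP
        have h3 : θ + (k:ℝ) * c₀ ≠ 0 := by rw [← hk]; exact honL p hpP
        have h4 := hd₀ k h3
        rw [hk] at h1
        linarith
      have hdE : densEps L P εr = 0 := by
        unfold densEps
        have hfun : (fun N : ℝ => (({p : ℂ | p ∈ P ∧ ‖p‖ ≤ N ∧ ∃ q ∈ L, ‖p - q‖ ≤ εr}.ncard : ℝ)) / (2 * N)) = fun _ => (0:ℝ) := by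
          funext N
          rw [hempty N]
          simp
        rw [hfun, Filter.limsup_const]
      exact dens_pos_contra hd hεr hdE.le hd
  · -- irrational direction : contradiction
    exfalso
    have hrat' : ∀ m n : ℤ, ¬(m = 0 ∧ n = 0) → (m:ℝ) * u + (n:ℝ) * v ≠ 0 := by
      intro m n hmn h0
      exact hrat ⟨m, n, hmn, h0⟩
    set M : ℝ := max 3 (8 / dens L P) with hM
    have hM3 : (3:ℝ) ≤ M := le_max_left _ _
    have hM0 : (0:ℝ) < M := by linarith
    -- finiteness of lattice points in a ball
    have hball : ∀ R : ℝ, {mn : ℤ × ℤ | ‖(mn.1:ℂ) * e₁ + (mn.2:ℂ) * e₂‖ ≤ R}.Finite := by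
      intro R
      rcases le_or_gt 0 R with hR | hR
      · set K : ℤ := ⌈R * ‖β‖ * (a⁻¹ + b⁻¹)⌉ with hK
        apply Set.Finite.subset ((Set.finite_Icc (-K) K).prod (Set.finite_Icc (-K) K))
        rintro ⟨m, n⟩ hmn
        simp only [Set.mem_setOf_eq] at hmn
        have hnorm : ‖β * ((m:ℂ) * e₁ + (n:ℂ) * e₂)‖ ≤ ‖β‖ * R := by
          rw [norm_mul]
          exact mul_le_mul_of_nonneg_left hmn (norm_nonneg β)
        rw [hco m n] at hnorm
        have hre : |a * (m:ℝ)| ≤ ‖β‖ * R := by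
          have h1 : (((a * m : ℝ) : ℂ) + ((b * n : ℝ) : ℂ) * Complex.I).re = a * (m:ℝ) := by
            simp
          calc |a * (m:ℝ)| = |(((a * m : ℝ) : ℂ) + ((b * n : ℝ) : ℂ) * Complex.I).re| := by rw [h1]
            _ ≤ ‖((a * m : ℝ) : ℂ) + ((b * n : ℝ) : ℂ) * Complex.I‖ := Complex.abs_re_le_norm _
            _ ≤ ‖β‖ * R := hnorm
        have him : |b * (n:ℝ)| ≤ ‖β‖ * R := by
          have h1 : (((a * m : ℝ) : ℂ) + ((b * n : ℝ) : ℂ) * Complex.I).im = b * (n:ℝ) := by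
            simp
          calc |b * (n:ℝ)| = |(((a * m : ℝ) : ℂ) + ((b * n : ℝ) : ℂ) * Complex.I).im| := by rw [h1]
            _ ≤ ‖((a * m : ℝ) : ℂ) + ((b * n : ℝ) : ℂ) * Complex.I‖ := Complex.abs_im_le_norm _
            _ ≤ ‖β‖ * R := hnorm
        have hmK : |(m:ℝ)| ≤ R * ‖β‖ * (a⁻¹ + b⁻¹) := by
          rw [abs_mul, abs_of_pos ha] at hre
          have h2 : |(m:ℝ)| ≤ ‖β‖ * R / a := by
            rw [le_div_iff₀ ha]
            linarith
          calc |(m:ℝ)| ≤ ‖β‖ * R / a := h2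
            _ ≤ R * ‖β‖ * (a⁻¹ + b⁻¹) := by
                rw [div_eq_mul_inv]
                have : (0:ℝ) ≤ R * ‖β‖ := by positivity
                have hb' : (0:ℝ) ≤ b⁻¹ := by positivity
                nlinarith
        have hnK : |(n:ℝ)| ≤ R * ‖β‖ * (a⁻¹ + b⁻¹) := by
          rw [abs_mul, abs_of_pos hb] at him
          have h2 : |(n:ℝ)| ≤ ‖β‖ * R / b := by
            rw [le_div_iff₀ hb]
            linarith
          calc |(n:ℝ)| ≤ ‖β‖ * R / b := h2
            _ ≤ R * ‖β‖ * (a⁻¹ + b⁻¹) := by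
                rw [div_eq_mul_inv]
                have : (0:ℝ) ≤ R * ‖β‖ := by positivity
                have ha' : (0:ℝ) ≤ a⁻¹ := by positivity
                nlinarith
        have hcK : R * ‖β‖ * (a⁻¹ + b⁻¹) ≤ (K:ℝ) := Int.le_ceil _
        constructor <;> simp only [Set.mem_Icc] <;> constructor
        · exact_mod_cast (by linarith [(abs_le.mp (hmK.trans hcK)).1] : -(K:ℝ) ≤ (m:ℝ))
        · exact_mod_cast (abs_le.mp (hmK.trans hcK)).2
        · exact_mod_cast (by linarith [(abs_le.mp (hnK.trans hcK)).1] : -(K:ℝ) ≤ (n:ℝ))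
        · exact_mod_cast (abs_le.mp (hnK.trans hcK)).2
      · convert Set.finite_empty
        ext mn
        simp only [Set.mem_setOf_eq, Set.mem_empty_iff_false, iff_false, not_le]
        calc R < 0 := hR
          _ ≤ ‖(mn.1:ℂ) * e₁ + (mn.2:ℂ) * e₂‖ := norm_nonneg _
    -- positive lower bound on |f| over nonzero lattice points in ball of radius M
    obtain ⟨δ, hδpos, hδ⟩ : ∃ δ, 0 < δ ∧ ∀ m n : ℤ, ¬(m = 0 ∧ n = 0) →
        ‖(m:ℂ) * e₁ + (n:ℂ) * e₂‖ ≤ M → δ ≤ |(m:ℝ) * u + (n:ℝ) * v| := by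
      set T : Finset (ℤ × ℤ) := (hball M).toFinset.filter (fun mn => ¬(mn.1 = 0 ∧ mn.2 = 0)) with hT
      by_cases hTne : T.Nonempty
      · have hTim : (T.image (fun mn : ℤ × ℤ => |(mn.1:ℝ) * u + (mn.2:ℝ) * v|)).Nonempty :=
          hTne.image _
        set δ := (T.image (fun mn : ℤ × ℤ => |(mn.1:ℝ) * u + (mn.2:ℝ) * v|)).min' hTim with hδdef
        refine ⟨δ, ?_, ?_⟩
        · obtain ⟨mn, hmnT, hmneq⟩ := Finset.mem_image.mp (Finset.min'_mem _ hTim)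
          rw [hδdef, ← hmneq]
          have hmn0 : ¬(mn.1 = 0 ∧ mn.2 = 0) := by
            have := (Finset.mem_filter.mp hmnT).2
            simpa using this
          exact abs_pos.mpr (hrat' mn.1 mn.2 hmn0)
        · intro m n hmn hle
          apply Finset.min'_le
          apply Finset.mem_image.mpr
          refine ⟨(m, n), ?_, rfl⟩
          simp only [hT, Finset.mem_filter, Set.Finite.mem_toFinset, Set.mem_setOf_eq]
          exact ⟨hle, hmn⟩
      · refine ⟨1, one_pos, ?_⟩
        intro m n hmn hle
        exfalso
        apply hTne
        refine ⟨(m, n), ?_⟩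
        simp only [hT, Finset.mem_filter, Set.Finite.mem_toFinset, Set.mem_setOf_eq]
        exact ⟨hle, hmn⟩
    set εr : ℝ := min 1 (δ / (4 * ‖y‖)) with hεdef
    have hεpos : 0 < εr := lt_min one_pos (by positivity)
    have hεle1 : εr ≤ 1 := min_le_left _ _
    -- separation of strip points
    have hsepP : ∀ p q : ℂ, p ∈ P → q ∈ P → (∃ qq ∈ L, ‖p - qq‖ ≤ εr) →
        (∃ qq ∈ L, ‖q - qq‖ ≤ εr) → p ≠ q → ‖y‖ * M / 2 ≤ |g (p - x) - g (q - x)| := by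
      intro p q hp hq hnp hnq hne
      obtain ⟨m, n, hmn⟩ := hdiffP p hp q hq
      have hmn0 : ¬(m = 0 ∧ n = 0) := by
        rintro ⟨rfl, rfl⟩
        simp only [Int.cast_zero, zero_mul, add_zero] at hmn
        exact hne (sub_eq_zero.mp hmn)
      have hfpq : f (p - x) - f (q - x) = (m:ℝ) * u + (n:ℝ) * v := by
        rw [← hf_sub]
        have harg : (p - x) - (q - x) = p - q := by ring
        rw [harg, hmn, hflat]
      have hgpq : g (p - x) - g (q - x) = g ((m:ℂ) * e₁ + (n:ℂ) * e₂) := by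
        rw [← hg_sub]
        have harg : (p - x) - (q - x) = p - q := by ring
        rw [harg, hmn]
      have hflam : |(m:ℝ) * u + (n:ℝ) * v| ≤ 2 * (εr * ‖y‖) := by
        have h1 := hstrip εr p hnp
        have h2 := hstrip εr q hnq
        rw [← hfpq]
        calc |f (p - x) - f (q - x)| ≤ |f (p - x)| + |f (q - x)| := abs_sub _ _
          _ ≤ 2 * (εr * ‖y‖) := by linarith
      have hflam2 : |(m:ℝ) * u + (n:ℝ) * v| < δ := by
        have h4 : εr * ‖y‖ ≤ δ / 4 := by
          calc εr * ‖y‖ ≤ (δ / (4 * ‖y‖)) * ‖y‖ := mul_le_mul_of_nonneg_right (min_le_right _ _) hcy.le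
            _ = δ / 4 := by
                rw [div_mul_eq_mul_div, div_eq_div_iff (by positivity) (by norm_num : (4:ℝ) ≠ 0)]
                ring
        linarith
      have hMlam : M < ‖(m:ℂ) * e₁ + (n:ℂ) * e₂‖ := by
        by_contra hle
        push_neg at hle
        have := hδ m n hmn0 hle
        linarith
      rw [hgpq]
      have hid := hnormsq ((m:ℂ) * e₁ + (n:ℂ) * e₂)
      rw [hflat] at hid
      have hf2 : ((m:ℝ) * u + (n:ℝ) * v)^2 ≤ 4 * ‖y‖^2 := by
        have h5 : |(m:ℝ) * u + (n:ℝ) * v| ≤ 2 * ‖y‖ := by nlinarith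
        nlinarith [sq_abs ((m:ℝ) * u + (n:ℝ) * v), abs_nonneg ((m:ℝ) * u + (n:ℝ) * v)]
      have h4 : (‖y‖ * M / 2)^2 ≤ (g ((m:ℂ) * e₁ + (n:ℂ) * e₂))^2 := by
        have h9 : (0:ℝ) ≤ M^2 - 9 := by nlinarith [hM3]
        have hM2 : M^2 ≤ ‖(m:ℂ) * e₁ + (n:ℂ) * e₂‖^2 := by
          nlinarith [hMlam, hM0]
        have hl2 : M^2 * ‖y‖^2 ≤ ‖(m:ℂ) * e₁ + (n:ℂ) * e₂‖^2 * ‖y‖^2 :=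
          mul_le_mul_of_nonneg_right hM2 (sq_nonneg ‖y‖)
        nlinarith [hid, hf2, hl2, h9, sq_nonneg ‖y‖]
      nlinarith [sq_abs (g ((m:ℂ) * e₁ + (n:ℂ) * e₂)), abs_nonneg (g ((m:ℂ) * e₁ + (n:ℂ) * e₂)), mul_pos hcy hM0]
    -- counting bound
    have hcount : ∀ N : ℝ, 1 ≤ N →
        (({p : ℂ | p ∈ P ∧ ‖p‖ ≤ N ∧ ∃ q ∈ L, ‖p - q‖ ≤ εr}.ncard : ℝ)) ≤
          2 * ((N + ‖x‖) * ‖y‖) / (‖y‖ * M / 2) + 1 := by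
      intro N hN
      have hs0 : (0:ℝ) < ‖y‖ * M / 2 := by positivity
      have hG0 : (0:ℝ) ≤ (N + ‖x‖) * ‖y‖ := by
        apply mul_nonneg _ hcy.le
        linarith [norm_nonneg x]
      set S : Set ℂ := {p : ℂ | p ∈ P ∧ ‖p‖ ≤ N ∧ ∃ q ∈ L, ‖p - q‖ ≤ εr} with hS
      by_cases hfin : S.Finite
      · have hinj : Set.InjOn (fun p => g (p - x)) S := by
          intro p hp q hq hpq
          by_contra hne
          have h1 := hsepP p q hp.1 hq.1 hp.2.2 hq.2.2 hne
          have hpq' : g (p - x) = g (q - x) := hpq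
          rw [hpq'] at h1
          simp only [sub_self, abs_zero] at h1
          nlinarith [mul_pos hcy hM0]
        have hcard : (S.ncard : ℝ) = (((fun p => g (p - x)) '' S).ncard : ℝ) := by
          rw [Set.ncard_image_of_injOn hinj]
        rw [hcard]
        apply sep_count hs0 hG0
        · rintro _ ⟨p, hp, rfl⟩
          calc |g (p - x)| ≤ ‖p - x‖ * ‖y‖ := hg_bound _
            _ ≤ (N + ‖x‖) * ‖y‖ := by
                apply mul_le_mul_of_nonneg_right _ hcy.le
                calc ‖p - x‖ ≤ ‖p‖ + ‖x‖ := norm_sub_le _ _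
                  _ ≤ N + ‖x‖ := by linarith [hp.2.1]
        · rintro _ ⟨p, hp, rfl⟩ _ ⟨q, hq, rfl⟩ hne
          have hpqne : p ≠ q := by
            rintro rfl
            exact hne rfl
          exact hsepP p q hp.1 hq.1 hp.2.2 hq.2.2 hpqne
      · rw [Set.Infinite.ncard hfin]
        have : (0:ℝ) ≤ 2 * ((N + ‖x‖) * ‖y‖) / (‖y‖ * M / 2) := by positivity
        simp only [Nat.cast_zero]
        linarith
    -- limsup bound
    have hlims : densEps L P εr ≤ 2 / M := by
      set D : ℝ := (4 * ‖x‖ / M + 1) / 2 with hD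
      set hfun : ℝ → ℝ := fun N => 2 / M + D * N⁻¹ with hfn
      have htends : Filter.Tendsto hfun Filter.atTop (nhds (2 / M)) := by
        have h1 : Filter.Tendsto (fun N : ℝ => D * N⁻¹) Filter.atTop (nhds 0) := by
          simpa using tendsto_inv_atTop_zero.const_mul D
        have h2 := Filter.Tendsto.add (tendsto_const_nhds : Filter.Tendsto (fun _ : ℝ => 2 / M) Filter.atTop (nhds (2 / M))) h1
        simpa using h2
      have hfle : ∀ᶠ N in Filter.atTop,
          (({p : ℂ | p ∈ P ∧ ‖p‖ ≤ N ∧ ∃ q ∈ L, ‖p - q‖ ≤ εr}.ncard : ℝ)) / (2 * N) ≤ hfun N := by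
        filter_upwards [Filter.eventually_ge_atTop (1:ℝ)] with N hN
        have hc := hcount N hN
        have hN0 : (0:ℝ) < N := by linarith
        have hsimp : 2 * ((N + ‖x‖) * ‖y‖) / (‖y‖ * M / 2) = 4 * (N + ‖x‖) / M := by
          rw [div_eq_div_iff (by positivity) hM0.ne']
          ring
        rw [hsimp] at hc
        rw [div_le_iff₀ (by positivity : (0:ℝ) < 2 * N)]
        have hDexp : hfun N * (2 * N) = 4 * N / M + (4 * ‖x‖ / M + 1) := by
          rw [hfn, hD]
          field_simp
          ring
        rw [hDexp]
        have h6 : 4 * (N + ‖x‖) / M = 4 * N / M + 4 * ‖x‖ / M := by ring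
        linarith [hc, h6 ▸ hc]
      have hcob : Filter.IsCoboundedUnder (· ≤ ·) Filter.atTop
          (fun N : ℝ => (({p : ℂ | p ∈ P ∧ ‖p‖ ≤ N ∧ ∃ q ∈ L, ‖p - q‖ ≤ εr}.ncard : ℝ)) / (2 * N)) := by
        apply Filter.IsCoboundedUnder.of_frequently_ge (a := (0:ℝ))
        apply Filter.Eventually.frequently
        filter_upwards [Filter.eventually_ge_atTop (1:ℝ)] with N hN
        have hN0 : (0:ℝ) < N := by linarith
        positivity
      have hbdd : Filter.IsBoundedUnder (· ≤ ·) Filter.atTop hfun :=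
        htends.isBoundedUnder_le
      calc densEps L P εr ≤ Filter.limsup hfun Filter.atTop := by
            unfold densEps
            exact Filter.limsup_le_limsup hfle hcob hbdd
        _ = 2 / M := htends.limsup_eq
    have hM8 : 8 / dens L P ≤ M := le_max_right _ _
    have h2M : 2 / M ≤ dens L P / 4 := by
      have h8 : (0:ℝ) < 8 / dens L P := by positivity
      calc 2 / M ≤ 2 / (8 / dens L P) := by
            apply div_le_div_of_nonneg_left (by norm_num) h8 hM8
        _ = dens L P / 4 := by
            rw [div_div_eq_mul_div]
            ring
    exact dens_pos_contra hd hεpos (hlims.trans h2M) (by linarith)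
end NNPaper
end
end

section
/- Let Π = aℤ × ibℤ be a lattice in ℂ with a, b > 0, let β₁, β₂ ∈ ℂ\{0} and γ₁, γ₂ ∈ ℂ, and set P_j = β_j⁻¹(Π − γ_j) for j ∈ {1,2}. Suppose ℓ is a line in ℂ such that ℓ ∩ P_j = {x_j + k·y_j : k ∈ ℤ} are arithmetic sequences for j ∈ {1,2} with y₁/y₂ real and rational. Then for every c > 0 the set P_{ℓ,c} := {p ∈ P₁ ∪ P₂ : d(p, ℓ) ≤ c} is uniformly discrete, i.e., inf{|p − p'| : p, p' ∈ P_{ℓ,c}, p ≠ p'} > 0. -/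
open scoped Classical
noncomputable section
namespace NNPaper



lemma arith_gap (s w : ℂ) (hw : w ≠ 0) :
    ∃ δ : ℝ, 0 < δ ∧ ∀ k : ℤ, s + (k:ℂ) * w ≠ 0 → δ ≤ ‖s + (k:ℂ) * w‖ := by
  have hwpos : 0 < ‖w‖ := norm_pos_iff.mpr hw
  set K : ℤ := ⌈‖s‖ / ‖w‖⌉ + 1 with hK
  set T : Finset ℝ := ((Finset.Icc (-K) K).image (fun k : ℤ => ‖s + (k:ℂ) * w‖)).filter
      (fun r => 0 < r) with hT
  set T' : Finset ℝ := insert ‖w‖ T with hT'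
  have hne : T'.Nonempty := ⟨‖w‖, Finset.mem_insert_self _ _⟩
  refine ⟨T'.min' hne, ?_, ?_⟩
  · have hmem := T'.min'_mem hne
    rcases Finset.mem_insert.mp hmem with h | h
    · rw [h]; exact hwpos
    · exact (Finset.mem_filter.mp h).2
  · intro k hk
    by_cases hkK : k ∈ Finset.Icc (-K) K
    · apply Finset.min'_le
      refine Finset.mem_insert_of_mem (Finset.mem_filter.mpr ⟨?_, norm_pos_iff.mpr hk⟩)
      exact Finset.mem_image.mpr ⟨k, hkK, rfl⟩
    · have hK1 : (K:ℝ) ≤ |(k:ℝ)| := by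
        rw [Finset.mem_Icc, not_and_or, not_le, not_le] at hkK
        have : K ≤ |k| := by
          rcases hkK with h | h
          · calc K ≤ -k := by omega
              _ ≤ |k| := neg_le_abs k
          · exact le_trans h.le (le_abs_self k)
        exact_mod_cast this
      have hceil : ‖s‖ / ‖w‖ ≤ (⌈‖s‖ / ‖w‖⌉ : ℝ) := Int.le_ceil _
      have h1 : ‖s‖ ≤ (|(k:ℝ)| - 1) * ‖w‖ := by
        have : ‖s‖ / ‖w‖ + 1 ≤ |(k:ℝ)| := by
          have : ((⌈‖s‖ / ‖w‖⌉ + 1 : ℤ) : ℝ) ≤ |(k:ℝ)| := by rw [hK] at hK1; exact_mod_cast hK1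
          push_cast at this; linarith
        rw [div_add' _ _ _ (ne_of_gt hwpos)] at this
        calc ‖s‖ ≤ ‖s‖ + ‖w‖ - ‖w‖ := by linarith
          _ ≤ (|(k:ℝ)| - 1) * ‖w‖ := by
            rw [div_le_iff₀ hwpos] at this
            nlinarith
      have h2 : ‖w‖ ≤ ‖s + (k:ℂ) * w‖ := by
        have h3 : |(k:ℝ)| * ‖w‖ - ‖s‖ ≤ ‖s + (k:ℂ) * w‖ := by
          have : ‖(k:ℂ) * w‖ - ‖s‖ ≤ ‖s + (k:ℂ) * w‖ := by
            have := norm_sub_norm_le ((k:ℂ) * w) (-s)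
            simp only [norm_neg] at this
            calc ‖(k:ℂ) * w‖ - ‖s‖ ≤ ‖(k:ℂ) * w - -s‖ := this
              _ = ‖s + (k:ℂ) * w‖ := by ring_nf
          simpa [norm_mul, Complex.norm_intCast] using this
        nlinarith
      calc T'.min' hne ≤ ‖w‖ := Finset.min'_le _ _ (Finset.mem_insert_self _ _)
        _ ≤ _ := h2

lemma finset_gap (S : Finset ℂ) (w : ℂ) (hw : w ≠ 0) :
    ∃ δ : ℝ, 0 < δ ∧ ∀ s ∈ S, ∀ k : ℤ, s + (k:ℂ) * w ≠ 0 → δ ≤ ‖s + (k:ℂ) * w‖ := by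
  induction S using Finset.induction_on with
  | empty => exact ⟨1, one_pos, by simp⟩
  | @insert s₀ S hs₀ ih =>
    obtain ⟨δ₁, hδ₁, h₁⟩ := ih
    obtain ⟨δ₂, hδ₂, h₂⟩ := arith_gap s₀ w hw
    refine ⟨min δ₁ δ₂, lt_min hδ₁ hδ₂, ?_⟩
    intro s hs k hk
    rcases Finset.mem_insert.mp hs with rfl | hs
    · exact le_trans (min_le_right _ _) (h₂ k hk)
    · exact le_trans (min_le_left _ _) (h₁ s hs k hk)

lemma decomp (a b : ℝ) (β : ℂ) (hβ : β ≠ 0) (m n m₁ n₁ : ℤ)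
    (hM : ((m₁:ℂ)^2 + (n₁:ℂ)^2) ≠ 0) :
    β⁻¹ * ((a:ℂ)*m + Complex.I*((b:ℂ)*n)) =
      (((m*m₁ + n*n₁ : ℤ):ℂ)/((m₁:ℂ)^2+(n₁:ℂ)^2)) * (β⁻¹ * ((a:ℂ)*m₁ + Complex.I*((b:ℂ)*n₁)))
      + (((n*m₁ - m*n₁ : ℤ):ℂ)/((m₁:ℂ)^2+(n₁:ℂ)^2)) * (β⁻¹ * (-((a:ℂ)*n₁) + Complex.I*((b:ℂ)*m₁))) := by
  field_simp
  push_cast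
  ring

lemma jbound (a b : ℝ) (β : ℂ) (hβ : β ≠ 0) (m₁ n₁ : ℤ)
    (hMR : (0:ℝ) < (m₁:ℝ)^2 + (n₁:ℝ)^2) (ℓ j : ℤ) (t c' : ℝ)
    (h : ‖((ℓ:ℂ)/((m₁:ℂ)^2+(n₁:ℂ)^2)) * (β⁻¹ * ((a:ℂ)*m₁ + Complex.I*((b:ℂ)*n₁)))
        + ((j:ℂ)/((m₁:ℂ)^2+(n₁:ℂ)^2)) * (β⁻¹ * (-((a:ℂ)*n₁) + Complex.I*((b:ℂ)*m₁)))
        - (t:ℂ) * (β⁻¹ * ((a:ℂ)*m₁ + Complex.I*((b:ℂ)*n₁)))‖ ≤ c') :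
    |(j:ℝ)| * (a*b) ≤ c' * (‖β‖ * ‖(a:ℂ)*m₁ - Complex.I*((b:ℂ)*n₁)‖) := by
  set M : ℂ := (m₁:ℂ)^2+(n₁:ℂ)^2 with hMdef
  have hM : M ≠ 0 := by
    rw [hMdef]
    intro hc
    have : (((m₁:ℝ)^2 + (n₁:ℝ)^2 : ℝ) : ℂ) = 0 := by push_cast; push_cast at hc; exact hc
    rw [Complex.ofReal_eq_zero] at this
    linarith
  set v : ℂ := (a:ℂ)*m₁ + Complex.I*((b:ℂ)*n₁) with hv
  set u₀ : ℂ := -((a:ℂ)*n₁) + Complex.I*((b:ℂ)*m₁) with hu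
  set vbar : ℂ := (a:ℂ)*m₁ - Complex.I*((b:ℂ)*n₁) with hvb
  set z : ℂ := ((ℓ:ℂ)/M) * (β⁻¹ * v) + ((j:ℂ)/M) * (β⁻¹ * u₀) - (t:ℂ) * (β⁻¹ * v) with hz
  have hzb : M * (z * β) = ((ℓ:ℂ) - (t:ℂ)*M) * v + (j:ℂ) * u₀ := by
    rw [hz]; field_simp; ring
  set M' : ℝ := (m₁:ℝ)^2 + (n₁:ℝ)^2 with hM'
  have hMM : M = ((M':ℝ):ℂ) := by rw [hMdef, hM']; push_cast; ring
  have key : M * (z * β * vbar) = ((((ℓ:ℝ) - t*M')*((a*(m₁:ℝ))^2+(b*(n₁:ℝ))^2)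
        + (j:ℝ)*((b^2-a^2)*((m₁:ℝ)*(n₁:ℝ))) : ℝ) : ℂ)
      + (((j:ℝ)*(a*b)*M' : ℝ) : ℂ) * Complex.I := by
    have e1 : M * (z * β * vbar) = (M * (z * β)) * vbar := by ring
    rw [e1, hzb, hv, hu, hvb, hMM, hM']
    push_cast
    linear_combination (-(b:ℂ)^2 * (n₁:ℂ) * ((ℓ:ℂ)*(n₁:ℂ) + (j:ℂ)*(m₁:ℂ)
      - (t:ℂ)*((m₁:ℂ)^2+(n₁:ℂ)^2)*(n₁:ℂ))) * Complex.I_sq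
  have helper : ∀ X Y : ℝ, (((X:ℝ):ℂ) + ((Y:ℝ):ℂ) * Complex.I).im = Y := by intro X Y; simp
  have him : (z * β * vbar).im = (j:ℝ)*(a*b) := by
    have h1 : (M * (z * β * vbar)).im = M' * (z * β * vbar).im := by
      rw [hMM]; simp [Complex.mul_im]
    have h2 : (M * (z * β * vbar)).im = (j:ℝ)*(a*b)*M' := by
      rw [key, helper]
    have hM'ne : M' ≠ 0 := ne_of_gt hMR
    have h3 : M' * (z * β * vbar).im = M' * ((j:ℝ)*(a*b)) := by rw [← h1, h2]; ring
    exact mul_left_cancel₀ hM'ne h3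
  have habs : |(j:ℝ)*(a*b)| ≤ ‖z‖ * (‖β‖ * ‖vbar‖) := by
    rw [← him]
    calc |(z * β * vbar).im| ≤ ‖z * β * vbar‖ := Complex.abs_im_le_norm _
      _ = ‖z‖ * (‖β‖ * ‖vbar‖) := by
        rw [norm_mul, norm_mul]; ring
  have hnn : (0:ℝ) ≤ ‖β‖ * ‖vbar‖ := by positivity
  calc |(j:ℝ)| * (a*b) ≤ |(j:ℝ)*(a*b)| := by
        rw [abs_mul]; exact mul_le_mul_of_nonneg_left (le_abs_self _) (abs_nonneg _)
    _ ≤ ‖z‖ * (‖β‖ * ‖vbar‖) := habs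
    _ ≤ c' * (‖β‖ * ‖vbar‖) := mul_le_mul_of_nonneg_right h hnn

/-- **Uniform discreteness of two commensurate lattice translates near a line.** If
`P_j = β_j⁻¹ (Π − γ_j)` for the lattice `Π = aℤ × i bℤ` and a line `L` intersects
`P₁` and `P₂` in arithmetic sequences with steps `y₁`, `y₂` such that `y₁ / y₂` is
real and rational, then, for every `c > 0`, the set of points of `P₁ ∪ P₂` at
distance at most `c` from `L` is uniformly discrete. -/
theorem two_lattice_uniformly_discrete (a b : ℝ) (ha : 0 < a) (hb : 0 < b)
    (β₁ β₂ γ₁ γ₂ : ℂ) (hβ₁ : β₁ ≠ 0) (hβ₂ : β₂ ≠ 0) (P₁ P₂ : Set ℂ)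
    (hP₁ : P₁ = {z : ℂ | ∃ w ∈ latticeZ a b, z = β₁⁻¹ * (w - γ₁)})
    (hP₂ : P₂ = {z : ℂ | ∃ w ∈ latticeZ a b, z = β₂⁻¹ * (w - γ₂)})
    (L : Set ℂ) (hL : IsLine L)
    (x₁ y₁ x₂ y₂ : ℂ) (hy₁ : y₁ ≠ 0) (hy₂ : y₂ ≠ 0)
    (hseq₁ : L ∩ P₁ = {z : ℂ | ∃ k : ℤ, z = x₁ + (k : ℂ) * y₁})
    (hseq₂ : L ∩ P₂ = {z : ℂ | ∃ k : ℤ, z = x₂ + (k : ℂ) * y₂})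
    (hrat : ∃ q : ℚ, y₁ / y₂ = (q : ℂ)) :
    ∀ c : ℝ, 0 < c → ∃ δ : ℝ, 0 < δ ∧
      ∀ p ∈ (P₁ ∪ P₂) ∩ {p : ℂ | Metric.infDist p L ≤ c},
        ∀ p' ∈ (P₁ ∪ P₂) ∩ {p : ℂ | Metric.infDist p L ≤ c},
          p ≠ p' → δ ≤ ‖p - p'‖ := by
  intro c hc
  obtain ⟨x, y, hy, hLdef⟩ := hL
  have hx₁ : x₁ ∈ L ∩ P₁ := by rw [hseq₁]; exact ⟨0, by push_cast; ring⟩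
  have hx₁y : x₁ + y₁ ∈ L ∩ P₁ := by rw [hseq₁]; exact ⟨1, by push_cast; ring⟩
  have hx₂ : x₂ ∈ L ∩ P₂ := by rw [hseq₂]; exact ⟨0, by push_cast; ring⟩
  have hx₂y : x₂ + y₂ ∈ L ∩ P₂ := by rw [hseq₂]; exact ⟨1, by push_cast; ring⟩
  obtain ⟨t₀, ht₀⟩ : ∃ t : ℝ, x₁ = x + (t:ℂ)*y := by
    have := hx₁.1; rw [hLdef] at this; exact this
  obtain ⟨t₁, ht₁⟩ : ∃ t : ℝ, x₁ + y₁ = x + (t:ℂ)*y := by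
    have := hx₁y.1; rw [hLdef] at this; exact this
  have hy₁eq : ((t₁ - t₀ : ℝ):ℂ) * y = y₁ := by push_cast; linear_combination ht₀ - ht₁
  have htt : (t₁ - t₀ : ℝ) ≠ 0 := by
    intro h; apply hy₁; rw [← hy₁eq, h]; simp
  have hLsub : ∀ z ∈ L, ∃ t : ℝ, z = x₁ + (t:ℂ) * y₁ := by
    intro z hz
    rw [hLdef] at hz; obtain ⟨t, ht⟩ := hz
    refine ⟨(t - t₀)/(t₁ - t₀), ?_⟩
    have hc2 : ((t - t₀)/(t₁ - t₀) * (t₁ - t₀) : ℝ) = t - t₀ := div_mul_cancel₀ _ htt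
    calc z = x + (t:ℂ)*y := ht
      _ = x₁ + ((t - t₀ : ℝ):ℂ) * y := by rw [ht₀]; push_cast; ring
      _ = x₁ + ((((t - t₀)/(t₁ - t₀)) * (t₁ - t₀) : ℝ):ℂ) * y := by rw [hc2]
      _ = x₁ + (((t - t₀)/(t₁ - t₀) : ℝ):ℂ) * (((t₁ - t₀ : ℝ):ℂ) * y) := by push_cast; ring
      _ = _ := by rw [hy₁eq]
  have key₁ : ∀ p ∈ P₁, ∃ m n : ℤ, p - x₁ = β₁⁻¹ * ((a:ℂ)*m + Complex.I*((b:ℂ)*n)) := by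
    intro p hp
    rw [hP₁] at hp
    obtain ⟨wp, ⟨mp, np, hwp⟩, hpe⟩ := hp
    have hx := hx₁.2
    rw [hP₁] at hx
    obtain ⟨wx, ⟨mx, nx, hwx⟩, hxe⟩ := hx
    exact ⟨mp - mx, np - nx, by rw [hpe, hxe, hwp, hwx]; push_cast; ring⟩
  have key₂ : ∀ p ∈ P₂, ∃ m n : ℤ, p - x₂ = β₂⁻¹ * ((a:ℂ)*m + Complex.I*((b:ℂ)*n)) := by
    intro p hp
    rw [hP₂] at hp
    obtain ⟨wp, ⟨mp, np, hwp⟩, hpe⟩ := hp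
    have hx := hx₂.2
    rw [hP₂] at hx
    obtain ⟨wx, ⟨mx, nx, hwx⟩, hxe⟩ := hx
    exact ⟨mp - mx, np - nx, by rw [hpe, hxe, hwp, hwx]; push_cast; ring⟩
  obtain ⟨m₁, n₁, hm1⟩ := key₁ (x₁ + y₁) hx₁y.2
  have hy₁v : y₁ = β₁⁻¹ * ((a:ℂ)*m₁ + Complex.I*((b:ℂ)*n₁)) := by linear_combination hm1
  obtain ⟨m₂, n₂, hm2⟩ := key₂ (x₂ + y₂) hx₂y.2
  have hy₂v : y₂ = β₂⁻¹ * ((a:ℂ)*m₂ + Complex.I*((b:ℂ)*n₂)) := by linear_combination hm2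
  have hMR₁ : (0:ℝ) < (m₁:ℝ)^2 + (n₁:ℝ)^2 := by
    rcases eq_or_ne m₁ 0 with h | h
    · rcases eq_or_ne n₁ 0 with h' | h'
      · exfalso; apply hy₁; rw [hy₁v, h, h']; simp
      · have hn : ((n₁:ℝ)) ≠ 0 := Int.cast_ne_zero.mpr h'
        positivity
    · have hn : ((m₁:ℝ)) ≠ 0 := Int.cast_ne_zero.mpr h
      positivity
  have hMR₂ : (0:ℝ) < (m₂:ℝ)^2 + (n₂:ℝ)^2 := by
    rcases eq_or_ne m₂ 0 with h | h
    · rcases eq_or_ne n₂ 0 with h' | h'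
      · exfalso; apply hy₂; rw [hy₂v, h, h']; simp
      · have hn : ((n₂:ℝ)) ≠ 0 := Int.cast_ne_zero.mpr h'
        positivity
    · have hn : ((m₂:ℝ)) ≠ 0 := Int.cast_ne_zero.mpr h
      positivity
  have hM₁ : ((m₁:ℂ)^2 + (n₁:ℂ)^2) ≠ 0 := by
    intro hcon
    have h2 : (((m₁:ℝ)^2 + (n₁:ℝ)^2 : ℝ):ℂ) = 0 := by push_cast; exact_mod_cast hcon
    rw [Complex.ofReal_eq_zero] at h2; linarith
  have hM₂ : ((m₂:ℂ)^2 + (n₂:ℂ)^2) ≠ 0 := by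
    intro hcon
    have h2 : (((m₂:ℝ)^2 + (n₂:ℝ)^2 : ℝ):ℂ) = 0 := by push_cast; exact_mod_cast hcon
    rw [Complex.ofReal_eq_zero] at h2; linarith
  obtain ⟨q, hq⟩ := hrat
  have hy₁y₂ : y₁ = (q:ℂ) * y₂ := by
    rw [div_eq_iff hy₂] at hq; exact hq
  have hqd0 : ((q.den : ℕ):ℂ) ≠ 0 := Nat.cast_ne_zero.mpr q.den_nz
  have hy₁qd : y₁ = ((q.num:ℂ)/((q.den:ℕ):ℂ)) * y₂ := by
    rw [hy₁y₂, Rat.cast_def]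
  have hy₁r : y₁ = (((q:ℝ)):ℂ) * y₂ := by rw [hy₁y₂, Complex.ofReal_ratCast]
  set w : ℂ := y₂ / (((m₁:ℂ)^2 + (n₁:ℂ)^2) * ((m₂:ℂ)^2 + (n₂:ℂ)^2) * ((q.den:ℕ):ℂ)) with hwdef
  have hw : w ≠ 0 :=
    div_ne_zero hy₂ (mul_ne_zero (mul_ne_zero hM₁ hM₂) hqd0)
  set B₁ : ℝ := (c+1) * (‖β₁‖ * ‖(a:ℂ)*m₁ - Complex.I*((b:ℂ)*n₁)‖) / (a*b) with hB₁
  set B₂ : ℝ := (c+1) * (‖β₂‖ * ‖(a:ℂ)*m₂ - Complex.I*((b:ℂ)*n₂)‖) / (a*b) with hB₂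
  set J : ℤ := max ⌈B₁⌉ ⌈B₂⌉ with hJ
  set S : Finset ℂ := ((Finset.Icc (-J) J).image
        (fun j : ℤ => x₁ + ((j:ℂ)/((m₁:ℂ)^2 + (n₁:ℂ)^2)) * (β₁⁻¹ * (-((a:ℂ)*n₁) + Complex.I*((b:ℂ)*m₁)))))
      ∪ ((Finset.Icc (-J) J).image
        (fun j : ℤ => x₂ + ((j:ℂ)/((m₂:ℂ)^2 + (n₂:ℂ)^2)) * (β₂⁻¹ * (-((a:ℂ)*n₂) + Complex.I*((b:ℂ)*m₂))))) with hS
  have hab : (0:ℝ) < a*b := mul_pos ha hb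
  have point_rep : ∀ p ∈ (P₁ ∪ P₂) ∩ {p : ℂ | Metric.infDist p L ≤ c},
      ∃ s ∈ S, ∃ k : ℤ, p = s + (k:ℂ) * w := by
    intro p hp
    obtain ⟨hpU, hpd⟩ := hp
    have hLne : L.Nonempty := ⟨x₁, hx₁.1⟩
    have hlt : Metric.infDist p L < c + 1 := lt_of_le_of_lt hpd (lt_add_one c)
    obtain ⟨r, hrL, hrd⟩ := (Metric.infDist_lt_iff hLne).mp hlt
    obtain ⟨t, ht⟩ := hLsub r hrL
    have hdist : ‖p - x₁ - (t:ℂ)*y₁‖ ≤ c + 1 := by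
      have h2 : dist p r ≤ c + 1 := hrd.le
      rw [dist_eq_norm] at h2
      calc ‖p - x₁ - (t:ℂ)*y₁‖ = ‖p - r‖ := by rw [ht]; ring_nf
        _ ≤ c + 1 := h2
    rcases hpU with hp1 | hp2
    · obtain ⟨m, n, hmn⟩ := key₁ p hp1
      have hd : p - x₁ = (((m*m₁ + n*n₁ : ℤ):ℂ)/((m₁:ℂ)^2+(n₁:ℂ)^2)) * (β₁⁻¹ * ((a:ℂ)*m₁ + Complex.I*((b:ℂ)*n₁)))
          + (((n*m₁ - m*n₁ : ℤ):ℂ)/((m₁:ℂ)^2+(n₁:ℂ)^2)) * (β₁⁻¹ * (-((a:ℂ)*n₁) + Complex.I*((b:ℂ)*m₁))) := by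
        rw [hmn]; exact decomp a b β₁ hβ₁ m n m₁ n₁ hM₁
      have hnorm : ‖(((m*m₁ + n*n₁ : ℤ):ℂ)/((m₁:ℂ)^2+(n₁:ℂ)^2)) * (β₁⁻¹ * ((a:ℂ)*m₁ + Complex.I*((b:ℂ)*n₁)))
          + (((n*m₁ - m*n₁ : ℤ):ℂ)/((m₁:ℂ)^2+(n₁:ℂ)^2)) * (β₁⁻¹ * (-((a:ℂ)*n₁) + Complex.I*((b:ℂ)*m₁)))
          - (t:ℂ) * (β₁⁻¹ * ((a:ℂ)*m₁ + Complex.I*((b:ℂ)*n₁)))‖ ≤ c + 1 := by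
        rw [show (((m*m₁ + n*n₁ : ℤ):ℂ)/((m₁:ℂ)^2+(n₁:ℂ)^2)) * (β₁⁻¹ * ((a:ℂ)*m₁ + Complex.I*((b:ℂ)*n₁)))
          + (((n*m₁ - m*n₁ : ℤ):ℂ)/((m₁:ℂ)^2+(n₁:ℂ)^2)) * (β₁⁻¹ * (-((a:ℂ)*n₁) + Complex.I*((b:ℂ)*m₁)))
          - (t:ℂ) * (β₁⁻¹ * ((a:ℂ)*m₁ + Complex.I*((b:ℂ)*n₁)))
          = p - x₁ - (t:ℂ) * (β₁⁻¹ * ((a:ℂ)*m₁ + Complex.I*((b:ℂ)*n₁))) from by linear_combination -hd]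
        rw [← hy₁v]
        exact hdist
      have hjb := jbound a b β₁ hβ₁ m₁ n₁ hMR₁ (m*m₁ + n*n₁) (n*m₁ - m*n₁) t (c+1) hnorm
      have hjJ : (n*m₁ - m*n₁) ∈ Finset.Icc (-J) J := by
        have h3 : |((n*m₁ - m*n₁ : ℤ):ℝ)| ≤ B₁ := by
          rw [hB₁, le_div_iff₀ hab]; exact hjb
        have h4 : |((n*m₁ - m*n₁ : ℤ):ℝ)| ≤ (J:ℝ) := by
          refine le_trans h3 (le_trans (Int.le_ceil B₁) ?_)
          exact_mod_cast le_max_left ⌈B₁⌉ ⌈B₂⌉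
        have h5 : |(n*m₁ - m*n₁ : ℤ)| ≤ J := by exact_mod_cast h4
        rw [Finset.mem_Icc]
        exact abs_le.mp h5
      refine ⟨x₁ + (((n*m₁ - m*n₁ : ℤ):ℂ)/((m₁:ℂ)^2 + (n₁:ℂ)^2)) * (β₁⁻¹ * (-((a:ℂ)*n₁) + Complex.I*((b:ℂ)*m₁))),
        Finset.mem_union_left _ (Finset.mem_image.mpr ⟨n*m₁ - m*n₁, hjJ, rfl⟩),
        (m*m₁ + n*n₁) * q.num * (m₂^2 + n₂^2), ?_⟩
      have hstep : (((m*m₁ + n*n₁ : ℤ):ℂ)/((m₁:ℂ)^2+(n₁:ℂ)^2)) * y₁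
          = (((m*m₁ + n*n₁) * q.num * (m₂^2 + n₂^2) : ℤ):ℂ) * w := by
        rw [hwdef, hy₁qd]
        push_cast
        field_simp
      rw [hy₁v] at hstep
      linear_combination hd + hstep
    · obtain ⟨t₂, ht₂⟩ := hLsub x₂ hx₂.1
      obtain ⟨m, n, hmn⟩ := key₂ p hp2
      have hd : p - x₂ = (((m*m₂ + n*n₂ : ℤ):ℂ)/((m₂:ℂ)^2+(n₂:ℂ)^2)) * (β₂⁻¹ * ((a:ℂ)*m₂ + Complex.I*((b:ℂ)*n₂)))
          + (((n*m₂ - m*n₂ : ℤ):ℂ)/((m₂:ℂ)^2+(n₂:ℂ)^2)) * (β₂⁻¹ * (-((a:ℂ)*n₂) + Complex.I*((b:ℂ)*m₂))) := by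
        rw [hmn]; exact decomp a b β₂ hβ₂ m n m₂ n₂ hM₂
      have harg : p - x₂ - (((t - t₂)*(q:ℝ) : ℝ):ℂ)*y₂ = p - x₁ - (t:ℂ)*y₁ := by
        rw [ht₂, hy₁r]; push_cast; ring
      have hdist₂ : ‖p - x₂ - (((t - t₂)*(q:ℝ) : ℝ):ℂ)*y₂‖ ≤ c + 1 := by
        rw [harg]; exact hdist
      have hnorm : ‖(((m*m₂ + n*n₂ : ℤ):ℂ)/((m₂:ℂ)^2+(n₂:ℂ)^2)) * (β₂⁻¹ * ((a:ℂ)*m₂ + Complex.I*((b:ℂ)*n₂)))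
          + (((n*m₂ - m*n₂ : ℤ):ℂ)/((m₂:ℂ)^2+(n₂:ℂ)^2)) * (β₂⁻¹ * (-((a:ℂ)*n₂) + Complex.I*((b:ℂ)*m₂)))
          - ((((t - t₂)*(q:ℝ) : ℝ)):ℂ) * (β₂⁻¹ * ((a:ℂ)*m₂ + Complex.I*((b:ℂ)*n₂)))‖ ≤ c + 1 := by
        rw [show (((m*m₂ + n*n₂ : ℤ):ℂ)/((m₂:ℂ)^2+(n₂:ℂ)^2)) * (β₂⁻¹ * ((a:ℂ)*m₂ + Complex.I*((b:ℂ)*n₂)))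
          + (((n*m₂ - m*n₂ : ℤ):ℂ)/((m₂:ℂ)^2+(n₂:ℂ)^2)) * (β₂⁻¹ * (-((a:ℂ)*n₂) + Complex.I*((b:ℂ)*m₂)))
          - ((((t - t₂)*(q:ℝ) : ℝ)):ℂ) * (β₂⁻¹ * ((a:ℂ)*m₂ + Complex.I*((b:ℂ)*n₂)))
          = p - x₂ - ((((t - t₂)*(q:ℝ) : ℝ)):ℂ) * (β₂⁻¹ * ((a:ℂ)*m₂ + Complex.I*((b:ℂ)*n₂))) from by
            linear_combination -hd]
        rw [← hy₂v]
        exact hdist₂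
      have hjb := jbound a b β₂ hβ₂ m₂ n₂ hMR₂ (m*m₂ + n*n₂) (n*m₂ - m*n₂) ((t - t₂)*(q:ℝ)) (c+1) hnorm
      have hjJ : (n*m₂ - m*n₂) ∈ Finset.Icc (-J) J := by
        have h3 : |((n*m₂ - m*n₂ : ℤ):ℝ)| ≤ B₂ := by
          rw [hB₂, le_div_iff₀ hab]; exact hjb
        have h4 : |((n*m₂ - m*n₂ : ℤ):ℝ)| ≤ (J:ℝ) := by
          refine le_trans h3 (le_trans (Int.le_ceil B₂) ?_)
          exact_mod_cast le_max_right ⌈B₁⌉ ⌈B₂⌉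
        have h5 : |(n*m₂ - m*n₂ : ℤ)| ≤ J := by exact_mod_cast h4
        rw [Finset.mem_Icc]
        exact abs_le.mp h5
      refine ⟨x₂ + (((n*m₂ - m*n₂ : ℤ):ℂ)/((m₂:ℂ)^2 + (n₂:ℂ)^2)) * (β₂⁻¹ * (-((a:ℂ)*n₂) + Complex.I*((b:ℂ)*m₂))),
        Finset.mem_union_right _ (Finset.mem_image.mpr ⟨n*m₂ - m*n₂, hjJ, rfl⟩),
        (m*m₂ + n*n₂) * (m₁^2 + n₁^2) * (q.den : ℤ), ?_⟩
      have hstep : (((m*m₂ + n*n₂ : ℤ):ℂ)/((m₂:ℂ)^2+(n₂:ℂ)^2)) * y₂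
          = (((m*m₂ + n*n₂) * (m₁^2 + n₁^2) * (q.den:ℤ) : ℤ):ℂ) * w := by
        rw [hwdef]
        push_cast
        field_simp
      rw [hy₂v] at hstep
      linear_combination hd + hstep
  obtain ⟨δ, hδ, hgap⟩ := finset_gap ((S ×ˢ S).image (fun pr : ℂ × ℂ => pr.1 - pr.2)) w hw
  refine ⟨δ, hδ, ?_⟩
  intro p hp p' hp' hne
  obtain ⟨s, hs, k, hk⟩ := point_rep p hp
  obtain ⟨s', hs', k', hk'⟩ := point_rep p' hp'
  have hmem : s - s' ∈ (S ×ˢ S).image (fun pr : ℂ × ℂ => pr.1 - pr.2) :=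
    Finset.mem_image.mpr ⟨(s, s'), Finset.mem_product.mpr ⟨hs, hs'⟩, rfl⟩
  have heq : p - p' = (s - s') + ((k - k' : ℤ):ℂ) * w := by
    rw [hk, hk']; push_cast; ring
  have hne0 : (s - s') + ((k - k' : ℤ):ℂ) * w ≠ 0 := by
    rw [← heq]; exact sub_ne_zero.mpr hne
  have := hgap (s - s') hmem (k - k') hne0
  rw [heq]; exact this

end NNPaper
end
end
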